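/- arXiv:1402.3532 — 4 statements merged into one kernel-verified Lean document; each statement's English description precedes it below -/
import Mathlib

section
/- Let K be a field, n ≥ 1, and let K[A_n] = K[s, t_1 s, ..., t_n s, t_1^{-1} s, ..., t_n^{-1} s] ⊆ K[s, t_1^{±1}, ..., t_n^{±1}], with toric ideal I_{A_n} ⊆ K[z, x_1, ..., x_n, y_1, ..., y_n] the kernel of the map sending z ↦ s, x_i ↦ t_i s, y_i ↦ t_i^{-1} s. Then the set {x_i y_i − z^2 : 1 ≤ i ≤ n} ∪ {x_i y_i − x_j y_j : 1 ≤ i < j ≤ n} is a Gröbner basis of I_{A_n} with respect to every monomial order (a universal Gröbner basis of I_{A_n}). -/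
/-!
Common definitions: toric ideals/rings of monomial families, strong Koszulness
with respect to a system of algebra generators, initial ideals with respect to
a relation on exponent vectors, (reduced) Gröbner bases, the (graded) reverse
lexicographic order induced by an ordering of the variables, minimal monomial
generators, and compressedness.
-/

open MvPolynomial

noncomputable section

/-- The total degree of an exponent vector. -/
def expDeg {n : ℕ} (d : Fin n →₀ ℕ) : ℕ := d.sum fun _ e => e

/-- The toric ideal `I_A ⊆ K[x_1,…,x_n]` of the family of monomials
`u i = t^(a i)` in `K[t_1,…,t_d]`: the kernel of `π : x_i ↦ u_i`. -/
def toricIdeal (K : Type) [Field K] {n d : ℕ} (a : Fin n → (Fin d →₀ ℕ)) :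
    Ideal (MvPolynomial (Fin n) K) :=
  RingHom.ker (MvPolynomial.aeval
    (fun i => (MvPolynomial.monomial (a i) (1 : K) : MvPolynomial (Fin d) K)) :
      MvPolynomial (Fin n) K →ₐ[K] MvPolynomial (Fin d) K).toRingHom

/-- The toric ring `K[A] ⊆ K[t_1,…,t_d]` generated by the monomials `t^(a i)`. -/
def toricRing (K : Type) [Field K] {n d : ℕ} (a : Fin n → (Fin d →₀ ℕ)) :
    Subalgebra K (MvPolynomial (Fin d) K) :=
  Algebra.adjoin K (Set.range fun i => (MvPolynomial.monomial (a i) (1 : K)))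

/-- The generator `u_i = t^(a i)`, as an element of the toric ring `K[A]`. -/
def toricGen (K : Type) [Field K] {n d : ℕ} (a : Fin n → (Fin d →₀ ℕ)) (i : Fin n) :
    toricRing K a :=
  ⟨MvPolynomial.monomial (a i) (1 : K), Algebra.subset_adjoin (Set.mem_range_self i)⟩

/-- A commutative ring `R` is strongly Koszul with respect to the system of
generators `u_1,…,u_n` (of its maximal graded ideal) if for every chain
`i_1 < i_2 < ⋯ < i_r` of indices and every `j = 1,…,r` the colon ideal
`(u_{i_1},…,u_{i_{j-1}}) : u_{i_j}` is generated by a subset of `{u_1,…,u_n}`. -/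
def StronglyKoszulWith {R : Type} [CommRing R] {n : ℕ} (u : Fin n → R) : Prop :=
  ∀ (r : ℕ) (c : Fin r → Fin n), StrictMono c → ∀ j : Fin r,
    ∃ S : Set R, S ⊆ Set.range u ∧
      Submodule.colon (Ideal.span ((fun k => u (c k)) '' {k : Fin r | k < j}))
        (Ideal.span {u (c j)}) = Ideal.span S

/-- The toric ring `K[A]` is strongly Koszul (with respect to its monomial
generators `u_1,…,u_n`, which form its distinguished minimal system of
generators of the same degree). -/
def ToricStronglyKoszul (K : Type) [Field K] {n d : ℕ} (a : Fin n → (Fin d →₀ ℕ)) : Prop :=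
  StronglyKoszulWith (toricGen K a)

/-- `dd` is the exponent vector of the initial (leading) monomial of `f` with
respect to the strict comparison `lt` on exponent vectors. -/
def IsInitialExp {K : Type} [Field K] {n : ℕ}
    (lt : (Fin n →₀ ℕ) → (Fin n →₀ ℕ) → Prop)
    (f : MvPolynomial (Fin n) K) (dd : Fin n →₀ ℕ) : Prop :=
  dd ∈ f.support ∧ ∀ d' ∈ f.support, d' ≠ dd → lt d' dd

/-- The initial ideal `in_lt(I)`: the monomial ideal generated by the initial
monomials of the nonzero elements of `I`. -/
def initialIdeal {K : Type} [Field K] {n : ℕ}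
    (lt : (Fin n →₀ ℕ) → (Fin n →₀ ℕ) → Prop)
    (I : Ideal (MvPolynomial (Fin n) K)) : Ideal (MvPolynomial (Fin n) K) :=
  Ideal.span {m | ∃ f ∈ I, ∃ dd, IsInitialExp lt f dd ∧
    m = MvPolynomial.monomial dd (1 : K)}

/-- `G` is the reduced Gröbner basis of `I` with respect to the strict
comparison `lt` (coming from a monomial order): the elements of `G` lie in `I`,
are monic, their initial monomials generate the initial ideal of `I`,
and no monomial occurring in an element of `G` is divisible by the initial
monomial of another element of `G`. -/
def IsReducedGB {K : Type} [Field K] {n : ℕ}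
    (lt : (Fin n →₀ ℕ) → (Fin n →₀ ℕ) → Prop)
    (I : Ideal (MvPolynomial (Fin n) K)) (G : Finset (MvPolynomial (Fin n) K)) : Prop :=
  (∀ g ∈ G, g ∈ I) ∧
  (∀ g ∈ G, ∃ dd, IsInitialExp lt g dd ∧ MvPolynomial.coeff dd g = 1) ∧
  (initialIdeal lt I =
    Ideal.span {m | ∃ g ∈ G, ∃ dd, IsInitialExp lt g dd ∧
      m = MvPolynomial.monomial dd (1 : K)}) ∧
  (∀ g ∈ G, ∀ g' ∈ G, g' ≠ g → ∀ d' ∈ g.support, ∀ dd, IsInitialExp lt g' dd → ¬ dd ≤ d')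

/-- The strict comparison of the (graded) reverse lexicographic order induced by
the ordering `x_{ord 0} < x_{ord 1} < ⋯ < x_{ord (n-1)}` of the variables:
`x < y` iff `deg x < deg y`, or the degrees agree and `x` has a strictly larger
exponent than `y` at the smallest variable where they differ. -/
def rlexLT {n : ℕ} (ord : Fin n ≃ Fin n) (x y : Fin n →₀ ℕ) : Prop :=
  expDeg x < expDeg y ∨ (expDeg x = expDeg y ∧
    ∃ p : Fin n, y (ord p) < x (ord p) ∧ ∀ q : Fin n, q < p → x (ord q) = y (ord q))

/-- `dd` is (the exponent vector of) a member of `G(I)`, the minimal system of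
monomial generators of the monomial ideal `I`: the monomial `x^dd` lies in `I`
but no proper divisor of it does. -/
def IsMinGen {K : Type} [Field K] {n : ℕ} (I : Ideal (MvPolynomial (Fin n) K))
    (dd : Fin n →₀ ℕ) : Prop :=
  MvPolynomial.monomial dd (1 : K) ∈ I ∧
  ∀ d' : Fin n →₀ ℕ, d' ≤ dd → d' ≠ dd → MvPolynomial.monomial d' (1 : K) ∉ I

/-- The toric ring `K[A]` is compressed: the initial ideal of `I_A` is radical
for every reverse lexicographic order. -/
def ToricCompressed (K : Type) [Field K] {n d : ℕ} (a : Fin n → (Fin d →₀ ℕ)) : Prop :=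
  ∀ ord : Fin n ≃ Fin n,
    (initialIdeal (rlexLT ord) (toricIdeal K a)).radical
      = initialIdeal (rlexLT ord) (toricIdeal K a)

/-- The strict comparison on exponent vectors associated to a monomial order. -/
def MonomialOrder.ltRel {σ : Type*} (m : MonomialOrder σ) :
    (σ →₀ ℕ) → (σ →₀ ℕ) → Prop :=
  fun a b => m.toSyn a < m.toSyn b

/-- A quadratic binomial: a difference of two (monic) monomials of degree 2. -/
def IsQuadBinomial {K : Type} [Field K] {n : ℕ} (g : MvPolynomial (Fin n) K) : Prop :=
  ∃ b c : Fin n →₀ ℕ, expDeg b = 2 ∧ expDeg c = 2 ∧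
    g = MvPolynomial.monomial b (1 : K) - MvPolynomial.monomial c (1 : K)

end

open MvPolynomial

noncomputable section

/-- Exponents of Laurent monomials in `K[s, t_1^{±1}, …, t_n^{±1}]`:
the `s`-exponent (in `ℕ`) together with the `t`-exponents (in `ℤ`). -/
abbrev LaurentExp (n : ℕ) := ℕ × (Fin n →₀ ℤ)

/-- The Laurent polynomial ring `K[s, t_1^{±1}, …, t_n^{±1}]`. -/
abbrev LaurentRing (K : Type) [Field K] (n : ℕ) := AddMonoidAlgebra K (LaurentExp n)

/-- The exponent vectors of the monomials
`A_n = {s, t_1 s, …, t_n s, t_1⁻¹ s, …, t_n⁻¹ s}`: index `0` gives `s`,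
index `i` with `1 ≤ i ≤ n` gives `t_i s`, and index `n + i` gives `t_i⁻¹ s`. -/
def expA (n : ℕ) (m : Fin (2 * n + 1)) : LaurentExp n :=
  if h0 : (m : ℕ) = 0 then (1, 0)
  else if hx : (m : ℕ) ≤ n then
    (1, Finsupp.single ⟨(m : ℕ) - 1, by have := m.isLt; omega⟩ 1)
  else (1, - Finsupp.single ⟨(m : ℕ) - 1 - n, by have := m.isLt; omega⟩ 1)

/-- The toric ideal `I_{A_n} ⊆ K[z, x_1, …, x_n, y_1, …, y_n]`, the kernel of
`z ↦ s`, `x_i ↦ t_i s`, `y_i ↦ t_i⁻¹ s`. -/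
def toricIdealA (K : Type) [Field K] (n : ℕ) : Ideal (MvPolynomial (Fin (2 * n + 1)) K) :=
  RingHom.ker (MvPolynomial.aeval
    (fun v => (AddMonoidAlgebra.single (expA n v) (1 : K) : LaurentRing K n)) :
      MvPolynomial (Fin (2 * n + 1)) K →ₐ[K] LaurentRing K n).toRingHom

/-- The variable `z` (mapping to `s`). -/
def zIdx (n : ℕ) : Fin (2 * n + 1) := ⟨0, by omega⟩

/-- The variable `x_i` (mapping to `t_i s`). -/
def xIdx (n : ℕ) (i : Fin n) : Fin (2 * n + 1) := ⟨(i : ℕ) + 1, by have := i.isLt; omega⟩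

/-- The variable `y_i` (mapping to `t_i⁻¹ s`). -/
def yIdx (n : ℕ) (i : Fin n) : Fin (2 * n + 1) := ⟨n + 1 + (i : ℕ), by have := i.isLt; omega⟩

/-- `G` is a Gröbner basis of `I` with respect to the strict comparison `lt`:
`G ⊆ I` and the initial monomials of the elements of `G` generate the initial
ideal of `I`. -/
def IsGroebnerBasis {K : Type} [Field K] {n : ℕ}
    (lt : (Fin n →₀ ℕ) → (Fin n →₀ ℕ) → Prop)
    (I : Ideal (MvPolynomial (Fin n) K)) (G : Set (MvPolynomial (Fin n) K)) : Prop :=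
  (∀ g ∈ G, g ∈ I) ∧
  initialIdeal lt I =
    Ideal.span {mm | ∃ g ∈ G, ∃ dd, IsInitialExp lt g dd ∧
      mm = MvPolynomial.monomial dd (1 : K)}

namespace UGBAux

variable {n : ℕ}

lemma zIdx_val : ((zIdx n : Fin (2*n+1)) : ℕ) = 0 := rfl
lemma xIdx_val (i : Fin n) : ((xIdx n i : Fin (2*n+1)) : ℕ) = (i : ℕ) + 1 := rfl
lemma yIdx_val (i : Fin n) : ((yIdx n i : Fin (2*n+1)) : ℕ) = n + 1 + (i : ℕ) := rfl

lemma xIdx_inj {i j : Fin n} (h : xIdx n i = xIdx n j) : i = j := by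
  have := congrArg Fin.val h
  simp only [xIdx_val] at this
  exact Fin.ext (by omega)

lemma yIdx_inj {i j : Fin n} (h : yIdx n i = yIdx n j) : i = j := by
  have := congrArg Fin.val h
  simp only [yIdx_val] at this
  exact Fin.ext (by omega)

lemma z_ne_x (i : Fin n) : zIdx n ≠ xIdx n i := by
  intro h; have := congrArg Fin.val h; simp [zIdx_val, xIdx_val] at this

lemma z_ne_y (i : Fin n) : zIdx n ≠ yIdx n i := by
  intro h; have := congrArg Fin.val h; simp [zIdx_val, yIdx_val] at this; omega

lemma x_ne_y (i j : Fin n) : xIdx n i ≠ yIdx n j := by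
  intro h; have := congrArg Fin.val h
  simp only [xIdx_val, yIdx_val] at this
  have := i.isLt; omega

/-- Splitting a sum over `Fin (2*n+1)` into the `z`, `x`, `y` parts. -/
lemma sum_split {M : Type*} [AddCommMonoid M] (g : Fin (2*n+1) → M) :
    ∑ v, g v = g (zIdx n) + ((∑ i, g (xIdx n i)) + ∑ i, g (yIdx n i)) := by
  have hx : Set.InjOn (xIdx n) (Finset.univ : Finset (Fin n)) := fun i _ j _ h => xIdx_inj h
  have hy : Set.InjOn (yIdx n) (Finset.univ : Finset (Fin n)) := fun i _ j _ h => yIdx_inj h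
  have huniv : (Finset.univ : Finset (Fin (2*n+1))) =
      insert (zIdx n) ((Finset.univ.image (xIdx n)) ∪ (Finset.univ.image (yIdx n))) := by
    apply Finset.ext
    intro v
    simp only [Finset.mem_univ, true_iff, Finset.mem_insert, Finset.mem_union,
      Finset.mem_image]
    rcases Nat.lt_or_ge 0 (v : ℕ) with h0 | h0
    · rcases Nat.lt_or_ge (n : ℕ) (v : ℕ) with h1 | h1
      · right; right
        exact ⟨⟨(v : ℕ) - 1 - n, by have := v.isLt; omega⟩, trivial,
          Fin.ext (by simp [yIdx_val]; omega)⟩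
      · right; left
        exact ⟨⟨(v : ℕ) - 1, by omega⟩, trivial,
          Fin.ext (by simp [xIdx_val]; omega)⟩
    · left; exact Fin.ext (by rw [zIdx_val]; omega)
  have hdis : Disjoint (Finset.univ.image (xIdx n)) (Finset.univ.image (yIdx n)) := by
    rw [Finset.disjoint_left]
    rintro a ha hb
    simp only [Finset.mem_image] at ha hb
    obtain ⟨i, _, rfl⟩ := ha
    obtain ⟨j, _, h⟩ := hb
    exact x_ne_y i j h.symm
  have hz : zIdx n ∉ (Finset.univ.image (xIdx n)) ∪ (Finset.univ.image (yIdx n)) := by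
    simp only [Finset.mem_union, Finset.mem_image]
    rintro (⟨i, _, h⟩ | ⟨i, _, h⟩)
    · exact z_ne_x i h.symm
    · exact z_ne_y i h.symm
  rw [huniv, Finset.sum_insert hz, Finset.sum_union hdis,
    Finset.sum_image (fun i _ j _ h => xIdx_inj h),
    Finset.sum_image (fun i _ j _ h => yIdx_inj h)]

lemma expA_z : expA n (zIdx n) = (1, 0) := rfl

lemma expA_x (i : Fin n) : expA n (xIdx n i) = (1, Finsupp.single i 1) := by
  have h1 : ((xIdx n i : Fin (2*n+1)) : ℕ) = (i : ℕ) + 1 := rfl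
  have h2 : (i : ℕ) + 1 ≤ n := i.isLt
  simp only [expA, h1]
  rw [dif_neg (by omega), dif_pos (by omega)]
  congr 2 <;> exact Fin.ext (show (i : ℕ) + 1 - 1 = (i : ℕ) by omega)

lemma expA_y (i : Fin n) : expA n (yIdx n i) = (1, -Finsupp.single i 1) := by
  have h1 : ((yIdx n i : Fin (2*n+1)) : ℕ) = n + 1 + (i : ℕ) := rfl
  simp only [expA, h1]
  rw [dif_neg (by omega), dif_neg (by omega)]
  congr 3
  exact Fin.ext (show n + 1 + (i : ℕ) - 1 - n = (i : ℕ) by omega)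

lemma nsmul_fst (c : ℕ) (p : LaurentExp n) : (c • p).1 = c * p.1 := by
  induction c with
  | zero => simp
  | succ c ih => rw [succ_nsmul]; simp [Prod.fst_add, ih]; ring

lemma nsmul_snd (c : ℕ) (p : LaurentExp n) (j : Fin n) :
    ((c • p).2) j = (c : ℤ) * p.2 j := by
  induction c with
  | zero => simp
  | succ c ih =>
    rw [succ_nsmul]
    simp only [Prod.snd_add, Finsupp.add_apply, ih]
    push_cast; ring

lemma expA_fst (v : Fin (2*n+1)) : (expA n v).1 = 1 := by
  simp only [expA]; split_ifs <;> rfl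

/-- The exponent of the image Laurent monomial. -/
def Φ (dd : Fin (2*n+1) →₀ ℕ) : LaurentExp n := ∑ v, dd v • expA n v

lemma Φ_fst (dd : Fin (2*n+1) →₀ ℕ) :
    (Φ (n := n) dd).1 = dd (zIdx n) + ((∑ i, dd (xIdx n i)) + ∑ i, dd (yIdx n i)) := by
  have h : (Φ (n := n) dd).1 = ∑ v, dd v := by
    rw [Φ, Prod.fst_sum]
    exact Finset.sum_congr rfl (fun v _ => by rw [nsmul_fst, expA_fst, mul_one])
  rw [h, sum_split (fun v => dd v)]

lemma Φ_snd (dd : Fin (2*n+1) →₀ ℕ) (j : Fin n) :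
    ((Φ (n := n) dd).2) j = (dd (xIdx n j) : ℤ) - dd (yIdx n j) := by
  have h : ((Φ (n := n) dd).2) j = ∑ v, ((dd v • expA n v).2) j := by
    rw [Φ, Prod.snd_sum, Finsupp.finset_sum_apply]
  rw [h, sum_split (fun v => ((dd v • expA n v).2) j)]
  have hz : ((dd (zIdx n) • expA n (zIdx n)).2) j = 0 := by
    rw [nsmul_snd, expA_z]; simp
  have hx : ∀ i, ((dd (xIdx n i) • expA n (xIdx n i)).2) j
      = if i = j then (dd (xIdx n i) : ℤ) else 0 := by
    intro i; rw [nsmul_snd, expA_x]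
    simp [Finsupp.single_apply, mul_ite]
  have hy : ∀ i, ((dd (yIdx n i) • expA n (yIdx n i)).2) j
      = if i = j then -(dd (yIdx n i) : ℤ) else 0 := by
    intro i; rw [nsmul_snd, expA_y]
    simp only [Finsupp.coe_neg, Pi.neg_apply, Finsupp.single_apply, mul_ite, mul_one, mul_zero,
      mul_neg]
    split_ifs <;> simp
  rw [hz, Finset.sum_congr rfl (fun i _ => hx i), Finset.sum_congr rfl (fun i _ => hy i),
    Finset.sum_ite_eq' Finset.univ j (fun i => (dd (xIdx n i) : ℤ)),
    Finset.sum_ite_eq' Finset.univ j (fun i => -(dd (yIdx n i) : ℤ))]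
  simp [sub_eq_add_neg]

variable (K : Type) [Field K]

/-- The defining map of the toric ideal. -/
def π : MvPolynomial (Fin (2*n+1)) K →ₐ[K] LaurentRing K n :=
  MvPolynomial.aeval (fun v => AddMonoidAlgebra.single (expA n v) (1 : K))

lemma mem_toricIdealA {f : MvPolynomial (Fin (2*n+1)) K} (hf : f ∈ toricIdealA K n) :
    π (n := n) K f = 0 := by
  rw [toricIdealA, RingHom.mem_ker] at hf
  exact hf

lemma toricIdealA_mem {f : MvPolynomial (Fin (2*n+1)) K} (hf : π (n := n) K f = 0) :
    f ∈ toricIdealA K n := by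
  rw [toricIdealA, RingHom.mem_ker]
  exact hf

lemma prod_single_pow (s : Finset (Fin (2*n+1))) (e : Fin (2*n+1) → ℕ) :
    (∏ v ∈ s, (AddMonoidAlgebra.single (expA n v) (1 : K)) ^ (e v))
      = AddMonoidAlgebra.single (∑ v ∈ s, e v • expA n v) (1 : K) := by
  induction s using Finset.cons_induction with
  | empty => simp [AddMonoidAlgebra.one_def]
  | cons a s ha ih =>
    rw [Finset.prod_cons, Finset.sum_cons, ih, AddMonoidAlgebra.single_pow,
      AddMonoidAlgebra.single_mul_single, one_pow, one_mul]

lemma π_monomial (dd : Fin (2*n+1) →₀ ℕ) (c : K) :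
    π (n := n) K (MvPolynomial.monomial dd c)
      = AddMonoidAlgebra.single (Φ (n := n) dd) c := by
  rw [π, MvPolynomial.aeval_monomial,
    Finsupp.prod_fintype _ _ (fun v => pow_zero _), prod_single_pow,
    ← Algebra.smul_def, AddMonoidAlgebra.smul_single, smul_eq_mul, mul_one]
  rfl

lemma exists_partner {f : MvPolynomial (Fin (2*n+1)) K}
    (hf : f ∈ toricIdealA K n) {dd₀ : Fin (2*n+1) →₀ ℕ} (h0 : dd₀ ∈ f.support) :
    ∃ dd' ∈ f.support, dd' ≠ dd₀ ∧ Φ (n := n) dd' = Φ (n := n) dd₀ := by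
  by_contra hcon
  push_neg at hcon
  have hπ : π (n := n) K f = 0 := mem_toricIdealA K hf
  have hf' : π (n := n) K f = ∑ dd ∈ f.support,
      AddMonoidAlgebra.single (Φ (n := n) dd) (MvPolynomial.coeff dd f) := by
    conv_lhs => rw [MvPolynomial.as_sum f]
    rw [map_sum]
    exact Finset.sum_congr rfl fun dd _ => π_monomial K dd _
  have h2 : (∑ dd ∈ f.support, Finsupp.single (Φ (n := n) dd) (MvPolynomial.coeff dd f))
      = (0 : LaurentExp n →₀ K) := by
    simpa only [AddMonoidAlgebra.coeff_sum, AddMonoidAlgebra.coeff_single,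
      AddMonoidAlgebra.coeff_zero] using congrArg AddMonoidAlgebra.coeff (hf'.symm.trans hπ)
  have happ := congrArg (fun g : LaurentExp n →₀ K => g (Φ (n := n) dd₀)) h2
  simp only [Finsupp.finset_sum_apply, Finsupp.coe_zero, Pi.zero_apply] at happ
  rw [Finset.sum_eq_single_of_mem dd₀ h0 ?_] at happ
  · rw [Finsupp.single_apply, if_pos rfl] at happ
    exact (MvPolynomial.mem_support_iff.mp h0) happ
  · intro dd hdd hne
    rw [Finsupp.single_apply, if_neg (hcon dd hdd hne)]

section Core
variable {M : Type*} [AddCommMonoid M] [LinearOrder M] [IsOrderedCancelAddMonoid M]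

lemma split_smul (A Ah Mh : ℕ) (h : A = Ah + Mh) (XX : M) : A • XX = Ah • XX + Mh • XX := by
  rw [h, add_smul]

lemma caseA {N : ℕ} (Z : M) (X Y : Fin N → M)
    (hZ : ∀ i, Z + Z ≤ X i + Y i)
    (a a' : ℕ) (p q p' q' : Fin N → ℕ)
    (hdeg : a + ∑ i, (p i + q i) = a' + ∑ i, (p' i + q' i))
    (hwt : ∀ i, p i + q' i = p' i + q i)
    (hpq : ∀ i, p i = 0 ∨ q i = 0) :
    a • Z + ∑ i, (p i • X i + q i • Y i) ≤ a' • Z + ∑ i, (p' i • X i + q' i • Y i) := by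
  have h1 : ∀ i, p' i = p i + min (p' i) (q' i) ∧ q' i = q i + min (p' i) (q' i) := fun i => by
    have h := hwt i; have h' := hpq i; omega
  have hsum : ∑ i, (p' i + q' i) = (∑ i, (p i + q i)) + 2 * ∑ i, min (p' i) (q' i) := by
    rw [Finset.mul_sum, ← Finset.sum_add_distrib]
    exact Finset.sum_congr rfl fun i _ => by have := h1 i; omega
  have ha : a = a' + 2 * ∑ i, min (p' i) (q' i) := by omega
  have hRHS : ∑ i, (p' i • X i + q' i • Y i)
      = (∑ i, (p i • X i + q i • Y i)) + ∑ i, min (p' i) (q' i) • (X i + Y i) := by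
    rw [← Finset.sum_add_distrib]
    refine Finset.sum_congr rfl fun i _ => ?_
    rw [split_smul (p' i) (p i) _ (h1 i).1 (X i),
        split_smul (q' i) (q i) _ (h1 i).2 (Y i), smul_add]
    abel
  have hkey : (2 * ∑ i, min (p' i) (q' i)) • Z ≤ ∑ i, min (p' i) (q' i) • (X i + Y i) := by
    have h2 : (2 * ∑ i, min (p' i) (q' i)) • Z = ∑ i, min (p' i) (q' i) • (Z + Z) := by
      rw [mul_comm, mul_smul, Finset.sum_smul]
      simp only [two_smul]
    rw [h2]
    exact Finset.sum_le_sum fun i _ => nsmul_le_nsmul_right (hZ i) _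
  calc a • Z + ∑ i, (p i • X i + q i • Y i)
      = (a' • Z + ∑ i, (p i • X i + q i • Y i)) + (2 * ∑ i, min (p' i) (q' i)) • Z := by
        rw [ha, add_smul]; abel
    _ ≤ (a' • Z + ∑ i, (p i • X i + q i • Y i)) + ∑ i, min (p' i) (q' i) • (X i + Y i) :=
        add_le_add le_rfl hkey
    _ = a' • Z + ∑ i, (p' i • X i + q' i • Y i) := by rw [hRHS]; abel

lemma caseB {N : ℕ} (Z : M) (X Y : Fin N → M) (k : Fin N)
    (hZk : X k + Y k ≤ Z + Z) (hXY : ∀ i, X k + Y k ≤ X i + Y i)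
    (a a' : ℕ) (p q p' q' : Fin N → ℕ)
    (hdeg : a + ∑ i, (p i + q i) = a' + ∑ i, (p' i + q' i))
    (hwt : ∀ i, p i + q' i = p' i + q i)
    (ha1 : a ≤ 1) (hpq : ∀ i, i ≠ k → p i = 0 ∨ q i = 0) :
    a • Z + ∑ i, (p i • X i + q i • Y i) ≤ a' • Z + ∑ i, (p' i • X i + q' i • Y i) := by
  have h1 : ∀ i, p i = (p i - min (p i) (q i)) + min (p i) (q i)
      ∧ q i = (q i - min (p i) (q i)) + min (p i) (q i)
      ∧ p' i = (p i - min (p i) (q i)) + min (p' i) (q' i)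
      ∧ q' i = (q i - min (p i) (q i)) + min (p' i) (q' i) := fun i => by
    have h := hwt i; omega
  have hmz : ∀ i, i ≠ k → min (p i) (q i) = 0 := fun i hik => by have := hpq i hik; omega
  have hLHS : ∑ i, (p i • X i + q i • Y i)
      = (∑ i, ((p i - min (p i) (q i)) • X i + (q i - min (p i) (q i)) • Y i))
        + min (p k) (q k) • (X k + Y k) := by
    have e : ∀ i : Fin N, p i • X i + q i • Y i
        = ((p i - min (p i) (q i)) • X i + (q i - min (p i) (q i)) • Y i)
          + min (p i) (q i) • (X i + Y i) := fun i => by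
      rw [split_smul (p i) (p i - min (p i) (q i)) (min (p i) (q i)) (by omega) (X i),
          split_smul (q i) (q i - min (p i) (q i)) (min (p i) (q i)) (by omega) (Y i), smul_add]
      abel
    rw [Finset.sum_congr rfl fun i _ => e i, Finset.sum_add_distrib]
    congr 1
    refine Finset.sum_eq_single_of_mem k (Finset.mem_univ k) fun i _ hik => ?_
    rw [hmz i hik, zero_smul]
  have hRHS : ∑ i, (p' i • X i + q' i • Y i)
      = (∑ i, ((p i - min (p i) (q i)) • X i + (q i - min (p i) (q i)) • Y i))
        + ∑ i, min (p' i) (q' i) • (X i + Y i) := by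
    rw [← Finset.sum_add_distrib]
    refine Finset.sum_congr rfl fun i _ => ?_
    rw [split_smul (p' i) (p i - min (p i) (q i)) (min (p' i) (q' i)) (h1 i).2.2.1 (X i),
        split_smul (q' i) (q i - min (p i) (q i)) (min (p' i) (q' i)) (h1 i).2.2.2 (Y i), smul_add]
    abel
  have hs1 : ∑ i, (p i + q i)
      = (∑ i, ((p i - min (p i) (q i)) + (q i - min (p i) (q i)))) + 2 * ∑ i, min (p i) (q i) := by
    rw [Finset.mul_sum, ← Finset.sum_add_distrib]
    exact Finset.sum_congr rfl fun i _ => by have := h1 i; omega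
  have hs2 : ∑ i, (p' i + q' i)
      = (∑ i, ((p i - min (p i) (q i)) + (q i - min (p i) (q i)))) + 2 * ∑ i, min (p' i) (q' i) := by
    rw [Finset.mul_sum, ← Finset.sum_add_distrib]
    exact Finset.sum_congr rfl fun i _ => by have := h1 i; omega
  have hs3 : ∑ i, min (p i) (q i) = min (p k) (q k) :=
    Finset.sum_eq_single_of_mem k (Finset.mem_univ k) fun i _ hik => hmz i hik
  have hdeg2 : a + 2 * min (p k) (q k) = a' + 2 * ∑ i, min (p' i) (q' i) := by omega
  have hu : ∑ i, min (p' i) (q' i) ≤ min (p k) (q k) := by omega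
  have ha' : a' = a + 2 * (min (p k) (q k) - ∑ i, min (p' i) (q' i)) := by omega
  have hmk : min (p k) (q k) = (min (p k) (q k) - ∑ i, min (p' i) (q' i))
      + ∑ i, min (p' i) (q' i) := by omega
  have hkey : min (p k) (q k) • (X k + Y k)
      ≤ (2 * (min (p k) (q k) - ∑ i, min (p' i) (q' i))) • Z
        + ∑ i, min (p' i) (q' i) • (X i + Y i) := by
    nth_rewrite 1 [hmk]
    rw [add_smul]
    refine add_le_add ?_ ?_
    · calc (min (p k) (q k) - ∑ i, min (p' i) (q' i)) • (X k + Y k)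
          ≤ (min (p k) (q k) - ∑ i, min (p' i) (q' i)) • (Z + Z) :=
            nsmul_le_nsmul_right hZk _
        _ = (2 * (min (p k) (q k) - ∑ i, min (p' i) (q' i))) • Z := by
            rw [← two_smul ℕ Z, ← mul_smul, mul_comm]
    · rw [Finset.sum_smul]
      exact Finset.sum_le_sum fun i _ => nsmul_le_nsmul_right (hXY i) _
  calc a • Z + ∑ i, (p i • X i + q i • Y i)
      = (a • Z + (∑ i, ((p i - min (p i) (q i)) • X i + (q i - min (p i) (q i)) • Y i)))
        + min (p k) (q k) • (X k + Y k) := by rw [hLHS]; abel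
    _ ≤ (a • Z + (∑ i, ((p i - min (p i) (q i)) • X i + (q i - min (p i) (q i)) • Y i)))
        + ((2 * (min (p k) (q k) - ∑ i, min (p' i) (q' i))) • Z
          + ∑ i, min (p' i) (q' i) • (X i + Y i)) := add_le_add le_rfl hkey
    _ = a' • Z + ∑ i, (p' i • X i + q' i • Y i) := by rw [hRHS, ha', add_smul]; abel

end Core

/-- The exponents of the `n+1` quadratic monomials `z²` and `x_i y_i`. -/
def κ (n : ℕ) : Option (Fin n) → (Fin (2*n+1) →₀ ℕ)
  | none => Finsupp.single (zIdx n) 2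
  | some i => Finsupp.single (xIdx n i) 1 + Finsupp.single (yIdx n i) 1

lemma κ_none_z : (κ n none) (zIdx n) = 2 := by simp [κ]
lemma κ_none_x (j : Fin n) : (κ n none) (xIdx n j) = 0 := by
  simp [κ, Finsupp.single_apply, z_ne_x j]
lemma κ_none_y (j : Fin n) : (κ n none) (yIdx n j) = 0 := by
  simp [κ, Finsupp.single_apply, z_ne_y j]
lemma κ_some_z (i : Fin n) : (κ n (some i)) (zIdx n) = 0 := by
  simp only [κ, Finsupp.add_apply, Finsupp.single_apply]
  rw [if_neg (show xIdx n i ≠ zIdx n from fun h => z_ne_x i h.symm),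
    if_neg (show yIdx n i ≠ zIdx n from fun h => z_ne_y i h.symm)]
  rfl
lemma κ_some_x (i j : Fin n) : (κ n (some i)) (xIdx n j) = if i = j then 1 else 0 := by
  simp only [κ, Finsupp.add_apply, Finsupp.single_apply]
  rw [if_neg (show yIdx n i ≠ xIdx n j from fun h => x_ne_y j i h.symm), add_zero]
  by_cases h : i = j
  · subst h; rw [if_pos rfl, if_pos rfl]
  · rw [if_neg (show xIdx n i ≠ xIdx n j from fun hh => h (xIdx_inj hh)), if_neg h]
lemma κ_some_y (i j : Fin n) : (κ n (some i)) (yIdx n j) = if i = j then 1 else 0 := by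
  simp only [κ, Finsupp.add_apply, Finsupp.single_apply]
  rw [if_neg (x_ne_y i j), zero_add]
  by_cases h : i = j
  · subst h; rw [if_pos rfl, if_pos rfl]
  · rw [if_neg (show yIdx n i ≠ yIdx n j from fun hh => h (yIdx_inj hh)), if_neg h]

lemma κ_ne {k k' : Option (Fin n)} (h : k ≠ k') : κ n k ≠ κ n k' := by
  intro he
  match k, k' with
  | none, none => exact h rfl
  | none, some i =>
    have := congrArg (fun w : Fin (2*n+1) →₀ ℕ => w (zIdx n)) he
    simp only [κ_none_z, κ_some_z] at this; omega
  | some i, none =>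
    have := congrArg (fun w : Fin (2*n+1) →₀ ℕ => w (zIdx n)) he
    simp only [κ_none_z, κ_some_z] at this; omega
  | some i, some j =>
    have hij : i ≠ j := fun hh => h (by rw [hh])
    have := congrArg (fun w : Fin (2*n+1) →₀ ℕ => w (xIdx n i)) he
    simp only [κ_some_x] at this
    rw [if_neg (show j ≠ i from fun hh => hij hh.symm)] at this
    simp at this

lemma Φ_κ (k : Option (Fin n)) : Φ (n := n) (κ n k) = ((2 : ℕ), (0 : Fin n →₀ ℤ)) := by
  have hx : ∀ (c : Fin n → ℕ) (j : Fin n), (∀ i, c i = if j = i then 1 else 0) →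
      ∑ i, c i = 1 := by
    intro c j hc
    rw [Finset.sum_congr rfl fun i _ => hc i, Finset.sum_ite_eq Finset.univ j (fun _ => 1),
      if_pos (Finset.mem_univ j)]
  apply Prod.ext
  · rw [Φ_fst]
    match k with
    | none => simp [κ_none_z, κ_none_x, κ_none_y]
    | some i =>
      rw [κ_some_z, hx _ i (fun j => κ_some_x i j), hx _ i (fun j => κ_some_y i j)]
  · apply Finsupp.ext; intro j
    rw [Φ_snd]
    match k with
    | none => rw [κ_none_x, κ_none_y]; simp
    | some i => rw [κ_some_x, κ_some_y]; split_ifs <;> simp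

lemma κ_none_le_iff (dd : Fin (2*n+1) →₀ ℕ) : κ n none ≤ dd ↔ 2 ≤ dd (zIdx n) := by
  constructor
  · intro h; have := (Finsupp.le_def.mp h) (zIdx n); rwa [κ_none_z] at this
  · intro h
    rw [Finsupp.le_def]
    intro v
    simp only [κ, Finsupp.single_apply]
    split_ifs with hv
    · rw [← hv]; exact h
    · exact Nat.zero_le _

lemma κ_some_le_iff (i : Fin n) (dd : Fin (2*n+1) →₀ ℕ) :
    κ n (some i) ≤ dd ↔ 1 ≤ dd (xIdx n i) ∧ 1 ≤ dd (yIdx n i) := by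
  constructor
  · intro h
    refine ⟨?_, ?_⟩
    · have := (Finsupp.le_def.mp h) (xIdx n i); rwa [κ_some_x, if_pos rfl] at this
    · have := (Finsupp.le_def.mp h) (yIdx n i); rwa [κ_some_y, if_pos rfl] at this
  · rintro ⟨h1, h2⟩
    rw [Finsupp.le_def]
    intro v
    simp only [κ, Finsupp.add_apply, Finsupp.single_apply]
    split_ifs with hv hw hw
    · exact absurd (hv.trans hw.symm) (x_ne_y i i)
    · rw [← hv]; omega
    · rw [← hw]; omega
    · exact Nat.zero_le _

lemma toSyn_single_smul (m : MonomialOrder (Fin (2*n+1))) (v : Fin (2*n+1)) (c : ℕ) :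
    m.toSyn (Finsupp.single v c) = c • m.toSyn (Finsupp.single v 1) := by
  rw [show Finsupp.single v c = c • Finsupp.single v (1:ℕ) from by
    rw [Finsupp.smul_single, smul_eq_mul, mul_one], map_nsmul]

lemma toSyn_decomp (m : MonomialOrder (Fin (2*n+1))) (dd : Fin (2*n+1) →₀ ℕ) :
    m.toSyn dd = dd (zIdx n) • m.toSyn (Finsupp.single (zIdx n) 1)
      + ∑ i, (dd (xIdx n i) • m.toSyn (Finsupp.single (xIdx n i) 1)
          + dd (yIdx n i) • m.toSyn (Finsupp.single (yIdx n i) 1)) := by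
  have hdd : (∑ v, Finsupp.single v (dd v)) = dd := by
    rw [← Finsupp.sum_fintype dd (fun v c => Finsupp.single v c) (fun v => Finsupp.single_zero v)]
    exact Finsupp.sum_single dd
  conv_lhs => rw [← hdd]
  rw [map_sum, sum_split (fun v => m.toSyn (Finsupp.single v (dd v)))]
  rw [toSyn_single_smul, Finset.sum_add_distrib,
    Finset.sum_congr rfl (fun i _ => toSyn_single_smul m (xIdx n i) (dd (xIdx n i))),
    Finset.sum_congr rfl (fun i _ => toSyn_single_smul m (yIdx n i) (dd (yIdx n i))),
    ← Finset.sum_add_distrib]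

lemma toSyn_κ_none (m : MonomialOrder (Fin (2*n+1))) :
    m.toSyn (κ n none) = m.toSyn (Finsupp.single (zIdx n) 1) + m.toSyn (Finsupp.single (zIdx n) 1) := by
  show m.toSyn (Finsupp.single (zIdx n) 2) = _
  rw [show (Finsupp.single (zIdx n) 2 : Fin (2*n+1) →₀ ℕ)
      = Finsupp.single (zIdx n) 1 + Finsupp.single (zIdx n) 1 from by
    rw [← Finsupp.single_add], map_add]

lemma toSyn_κ_some (m : MonomialOrder (Fin (2*n+1))) (i : Fin n) :
    m.toSyn (κ n (some i)) = m.toSyn (Finsupp.single (xIdx n i) 1)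
      + m.toSyn (Finsupp.single (yIdx n i) 1) := by
  show m.toSyn (Finsupp.single (xIdx n i) 1 + Finsupp.single (yIdx n i) 1) = _
  rw [map_add]

lemma isInitial_left (m : MonomialOrder (Fin (2*n+1))) (b c : Fin (2*n+1) →₀ ℕ) (hne : b ≠ c)
    (h : m.toSyn c < m.toSyn b) :
    IsInitialExp m.ltRel (MvPolynomial.monomial b (1:K) - MvPolynomial.monomial c 1) b := by
  constructor
  · rw [MvPolynomial.mem_support_iff, MvPolynomial.coeff_sub, MvPolynomial.coeff_monomial,
      MvPolynomial.coeff_monomial, if_pos rfl, if_neg (show c ≠ b from fun hh => hne hh.symm)]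
    simp
  · intro d' hd' hdb
    rw [MvPolynomial.mem_support_iff, MvPolynomial.coeff_sub, MvPolynomial.coeff_monomial,
      MvPolynomial.coeff_monomial,
      if_neg (show b ≠ d' from fun hh => hdb hh.symm)] at hd'
    by_cases hc : c = d'
    · subst hc; exact h
    · rw [if_neg hc] at hd'; simp at hd'

lemma isInitial_right (m : MonomialOrder (Fin (2*n+1))) (b c : Fin (2*n+1) →₀ ℕ) (hne : b ≠ c)
    (h : m.toSyn b < m.toSyn c) :
    IsInitialExp m.ltRel (MvPolynomial.monomial b (1:K) - MvPolynomial.monomial c 1) c := by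
  constructor
  · rw [MvPolynomial.mem_support_iff, MvPolynomial.coeff_sub, MvPolynomial.coeff_monomial,
      MvPolynomial.coeff_monomial, if_neg hne, if_pos rfl]
    simp
  · intro d' hd' hdc
    rw [MvPolynomial.mem_support_iff, MvPolynomial.coeff_sub, MvPolynomial.coeff_monomial,
      MvPolynomial.coeff_monomial,
      if_neg (show c ≠ d' from fun hh => hdc hh.symm)] at hd'
    by_cases hb : b = d'
    · subst hb; exact h
    · rw [if_neg hb] at hd'; simp at hd'

lemma binom_mem (k k' : Option (Fin n)) :
    (MvPolynomial.monomial (κ n k) (1:K) - MvPolynomial.monomial (κ n k') 1)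
      ∈ toricIdealA K n := by
  apply toricIdealA_mem
  rw [map_sub, π_monomial, π_monomial, Φ_κ, Φ_κ, sub_self]

lemma Xxy_eq (i : Fin n) : (MvPolynomial.X (xIdx n i) * MvPolynomial.X (yIdx n i) :
    MvPolynomial (Fin (2*n+1)) K) = MvPolynomial.monomial (κ n (some i)) 1 := by
  rw [show (MvPolynomial.X (xIdx n i) : MvPolynomial (Fin (2*n+1)) K)
      = MvPolynomial.monomial (Finsupp.single (xIdx n i) 1) 1 from by
    rw [← pow_one (MvPolynomial.X (xIdx n i)), MvPolynomial.X_pow_eq_monomial]]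
  rw [show (MvPolynomial.X (yIdx n i) : MvPolynomial (Fin (2*n+1)) K)
      = MvPolynomial.monomial (Finsupp.single (yIdx n i) 1) 1 from by
    rw [← pow_one (MvPolynomial.X (yIdx n i)), MvPolynomial.X_pow_eq_monomial]]
  rw [MvPolynomial.monomial_mul, mul_one]
  rfl

lemma Xz2_eq : ((MvPolynomial.X (zIdx n) : MvPolynomial (Fin (2*n+1)) K) ^ 2)
    = MvPolynomial.monomial (κ n none) 1 := by
  rw [MvPolynomial.X_pow_eq_monomial]
  rfl

end UGBAux

/-- **Example 1.4.**  The set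
`{x_i y_i - z² : 1 ≤ i ≤ n} ∪ {x_i y_i - x_j y_j : 1 ≤ i < j ≤ n}` is a
Gröbner basis of `I_{A_n}` with respect to every monomial order, i.e. a
universal Gröbner basis of `I_{A_n}`. -/
theorem universalGB_of_An (K : Type) [Field K] (n : ℕ) (hn : 1 ≤ n) :
    ∀ m : MonomialOrder (Fin (2 * n + 1)),
      IsGroebnerBasis m.ltRel (toricIdealA K n)
        ((Set.range fun i : Fin n =>
            (X (xIdx n i) * X (yIdx n i) - (X (zIdx n)) ^ 2 :
              MvPolynomial (Fin (2 * n + 1)) K)) ∪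
          {g | ∃ i j : Fin n, i < j ∧
            g = X (xIdx n i) * X (yIdx n i) - X (xIdx n j) * X (yIdx n j)}) := by
  intro m
  classical
  open UGBAux in
  set GG : Set (MvPolynomial (Fin (2 * n + 1)) K) :=
    (Set.range fun i : Fin n =>
        (X (xIdx n i) * X (yIdx n i) - (X (zIdx n)) ^ 2 :
          MvPolynomial (Fin (2 * n + 1)) K)) ∪
      {g | ∃ i j : Fin n, i < j ∧
        g = X (xIdx n i) * X (yIdx n i) - X (xIdx n j) * X (yIdx n j)} with hGG
  have hGI : ∀ g ∈ GG, g ∈ toricIdealA K n := by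
    rintro g (⟨i, rfl⟩ | ⟨i, j, hij, rfl⟩)
    · show X (xIdx n i) * X (yIdx n i) - X (zIdx n) ^ 2 ∈ toricIdealA K n
      rw [UGBAux.Xxy_eq, UGBAux.Xz2_eq]
      exact UGBAux.binom_mem K (some i) none
    · rw [UGBAux.Xxy_eq, UGBAux.Xxy_eq]
      exact UGBAux.binom_mem K (some i) (some j)
  unfold IsGroebnerBasis
  refine ⟨hGI, ?_⟩
  apply le_antisymm
  · unfold initialIdeal
    rw [Ideal.span_le]
    rintro mm ⟨f, hfI, dd, hinit, rfl⟩
    obtain ⟨dd', hdd'supp, hdd'ne, hΦ⟩ := UGBAux.exists_partner K hfI hinit.1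
    have hlt : m.toSyn dd' < m.toSyn dd := hinit.2 dd' hdd'supp hdd'ne
    obtain ⟨k₀, -, hk₀u⟩ := Finset.exists_min_image (Finset.univ : Finset (Option (Fin n)))
      (fun k => m.toSyn (UGBAux.κ n k)) ⟨none, Finset.mem_univ _⟩
    have hk₀ : ∀ k, m.toSyn (UGBAux.κ n k₀) ≤ m.toSyn (UGBAux.κ n k) :=
      fun k => hk₀u k (Finset.mem_univ k)
    have hdiv : ∃ k, k ≠ k₀ ∧ UGBAux.κ n k ≤ dd := by
      by_contra hcon
      push_neg at hcon
      refine absurd hlt (not_lt.mpr ?_)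
      have hfst := congrArg Prod.fst hΦ
      rw [UGBAux.Φ_fst, UGBAux.Φ_fst] at hfst
      have hwt : ∀ j : Fin n, dd (xIdx n j) + dd' (yIdx n j)
          = dd' (xIdx n j) + dd (yIdx n j) := by
        intro j
        have h2 := congrArg Prod.snd hΦ
        have h3 := DFunLike.congr_fun h2 j
        rw [UGBAux.Φ_snd, UGBAux.Φ_snd] at h3
        omega
      have hdeg : dd (zIdx n) + ∑ i, (dd (xIdx n i) + dd (yIdx n i))
          = dd' (zIdx n) + ∑ i, (dd' (xIdx n i) + dd' (yIdx n i)) := by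
        rw [Finset.sum_add_distrib, Finset.sum_add_distrib]
        omega
      rw [UGBAux.toSyn_decomp m dd, UGBAux.toSyn_decomp m dd']
      cases k₀ with
      | none =>
        have hZ : ∀ i : Fin n, m.toSyn (Finsupp.single (zIdx n) 1)
            + m.toSyn (Finsupp.single (zIdx n) 1)
            ≤ m.toSyn (Finsupp.single (xIdx n i) 1) + m.toSyn (Finsupp.single (yIdx n i) 1) := by
          intro i
          have := hk₀ (some i)
          rwa [UGBAux.toSyn_κ_none, UGBAux.toSyn_κ_some] at this
        have hpq : ∀ i : Fin n, dd (xIdx n i) = 0 ∨ dd (yIdx n i) = 0 := by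
          intro i
          have hni := hcon (some i) (by simp)
          rw [UGBAux.κ_some_le_iff] at hni
          omega
        exact UGBAux.caseA (m.toSyn (Finsupp.single (zIdx n) 1))
          (fun i => m.toSyn (Finsupp.single (xIdx n i) 1))
          (fun i => m.toSyn (Finsupp.single (yIdx n i) 1)) hZ
          (dd (zIdx n)) (dd' (zIdx n))
          (fun i => dd (xIdx n i)) (fun i => dd (yIdx n i))
          (fun i => dd' (xIdx n i)) (fun i => dd' (yIdx n i)) hdeg hwt hpq
      | some kk =>
        have hZk : m.toSyn (Finsupp.single (xIdx n kk) 1) + m.toSyn (Finsupp.single (yIdx n kk) 1)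
            ≤ m.toSyn (Finsupp.single (zIdx n) 1) + m.toSyn (Finsupp.single (zIdx n) 1) := by
          have := hk₀ none
          rwa [UGBAux.toSyn_κ_none, UGBAux.toSyn_κ_some] at this
        have hXY : ∀ i : Fin n, m.toSyn (Finsupp.single (xIdx n kk) 1)
            + m.toSyn (Finsupp.single (yIdx n kk) 1)
            ≤ m.toSyn (Finsupp.single (xIdx n i) 1) + m.toSyn (Finsupp.single (yIdx n i) 1) := by
          intro i
          have := hk₀ (some i)
          rwa [UGBAux.toSyn_κ_some, UGBAux.toSyn_κ_some] at this
        have ha1 : dd (zIdx n) ≤ 1 := by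
          have := hcon none (by simp)
          rw [UGBAux.κ_none_le_iff] at this
          omega
        have hpq : ∀ i : Fin n, i ≠ kk → dd (xIdx n i) = 0 ∨ dd (yIdx n i) = 0 := by
          intro i hik
          have := hcon (some i) (by simp [hik])
          rw [UGBAux.κ_some_le_iff] at this
          omega
        exact UGBAux.caseB (m.toSyn (Finsupp.single (zIdx n) 1))
          (fun i => m.toSyn (Finsupp.single (xIdx n i) 1))
          (fun i => m.toSyn (Finsupp.single (yIdx n i) 1)) kk hZk hXY
          (dd (zIdx n)) (dd' (zIdx n))
          (fun i => dd (xIdx n i)) (fun i => dd (yIdx n i))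
          (fun i => dd' (xIdx n i)) (fun i => dd' (yIdx n i)) hdeg hwt ha1 hpq
    obtain ⟨k, hkne, hkle⟩ := hdiv
    have hks : m.toSyn (UGBAux.κ n k₀) < m.toSyn (UGBAux.κ n k) :=
      lt_of_le_of_ne (hk₀ k) (fun h => UGBAux.κ_ne (Ne.symm hkne) (m.toSyn.injective h))
    obtain ⟨g, hgG, hginit⟩ : ∃ g ∈ GG, IsInitialExp m.ltRel g (UGBAux.κ n k) := by
      rcases k with _ | i
      · rcases k₀ with _ | j
        · exact absurd rfl hkne
        · refine ⟨X (xIdx n j) * X (yIdx n j) - X (zIdx n) ^ 2,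
            Set.mem_union_left _ ⟨j, rfl⟩, ?_⟩
          rw [UGBAux.Xxy_eq, UGBAux.Xz2_eq]
          exact UGBAux.isInitial_right K m _ _
            (UGBAux.κ_ne (show (some j : Option (Fin n)) ≠ none by simp)) hks
      · rcases k₀ with _ | j
        · refine ⟨X (xIdx n i) * X (yIdx n i) - X (zIdx n) ^ 2,
            Set.mem_union_left _ ⟨i, rfl⟩, ?_⟩
          rw [UGBAux.Xxy_eq, UGBAux.Xz2_eq]
          exact UGBAux.isInitial_left K m _ _
            (UGBAux.κ_ne (show (some i : Option (Fin n)) ≠ none by simp)) hks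
        · have hij : i ≠ j := fun h => hkne (by rw [h])
          rcases lt_or_gt_of_ne hij with h | h
          · refine ⟨X (xIdx n i) * X (yIdx n i) - X (xIdx n j) * X (yIdx n j),
              Set.mem_union_right _ ⟨i, j, h, rfl⟩, ?_⟩
            rw [UGBAux.Xxy_eq, UGBAux.Xxy_eq]
            exact UGBAux.isInitial_left K m _ _
              (UGBAux.κ_ne (show (some i : Option (Fin n)) ≠ some j by simp [hij])) hks
          · refine ⟨X (xIdx n j) * X (yIdx n j) - X (xIdx n i) * X (yIdx n i),
              Set.mem_union_right _ ⟨j, i, h, rfl⟩, ?_⟩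
            rw [UGBAux.Xxy_eq, UGBAux.Xxy_eq]
            exact UGBAux.isInitial_right K m _ _
              (UGBAux.κ_ne (show (some j : Option (Fin n)) ≠ some i by simp [hij, Ne.symm hij])) hks
    rw [show (MvPolynomial.monomial dd (1:K)) = MvPolynomial.monomial (dd - UGBAux.κ n k) 1
        * MvPolynomial.monomial (UGBAux.κ n k) 1 from by
      rw [MvPolynomial.monomial_mul, one_mul, tsub_add_cancel_of_le hkle]]
    exact Ideal.mul_mem_left _ _ (Ideal.subset_span ⟨g, hgG, UGBAux.κ n k, hginit, rfl⟩)
  · apply Ideal.span_mono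
    rintro mm ⟨g, hgG, dd, hinit, rfl⟩
    exact ⟨g, hGI g hgG, dd, hinit, rfl⟩


end
end

section
/- Let K be a field and n ≥ 1. The toric ring K[A_n] = K[s, t_1 s, ..., t_n s, t_1^{-1} s, ..., t_n^{-1} s] ⊆ K[s, t_1^{±1}, ..., t_n^{±1}] is strongly Koszul. -/
/-!
Common definitions: toric ideals/rings of monomial families, strong Koszulness
with respect to a system of algebra generators, initial ideals with respect to
a relation on exponent vectors, (reduced) Gröbner bases, the (graded) reverse
lexicographic order induced by an ordering of the variables, minimal monomial
generators, and compressedness.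
-/

open MvPolynomial

open MvPolynomial

noncomputable section

/-- The toric ring `K[A_n] = K[s, t_1 s, …, t_n s, t_1⁻¹ s, …, t_n⁻¹ s]`,
as a subalgebra of the Laurent polynomial ring. -/
def ringA (K : Type) [Field K] (n : ℕ) : Subalgebra K (LaurentRing K n) :=
  Algebra.adjoin K
    (Set.range fun v => (AddMonoidAlgebra.single (expA n v) (1 : K) : LaurentRing K n))

/-- The generators of `K[A_n]`, as elements of `K[A_n]`. -/
def ringAGen (K : Type) [Field K] (n : ℕ) (v : Fin (2 * n + 1)) : ringA K n :=
  ⟨AddMonoidAlgebra.single (expA n v) (1 : K),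
    Algebra.subset_adjoin (Set.mem_range_self v)⟩

def tnorm (a : Fin n →₀ ℤ) : ℕ := a.sum fun _ e => e.natAbs

lemma tnorm_eq_sum (a : Fin n →₀ ℤ) (s : Finset (Fin n)) (h : a.support ⊆ s) :
    tnorm a = ∑ x ∈ s, (a x).natAbs :=
  Finsupp.sum_of_support_subset a h _ (by simp)

lemma tnorm_erase_add (a : Fin n →₀ ℤ) (i : Fin n) :
    tnorm (a.erase i) + (a i).natAbs = tnorm a := by
  classical
  have h1 : tnorm a = ∑ x ∈ insert i a.support, (a x).natAbs :=
    tnorm_eq_sum a _ (Finset.subset_insert _ _)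
  have h2 : tnorm (a.erase i) = ∑ x ∈ (insert i a.support).erase i, (a x).natAbs := by
    rw [tnorm_eq_sum (a.erase i) ((insert i a.support).erase i)
      (by intro x hx; simp only [Finsupp.support_erase, Finset.mem_erase] at hx ⊢
          exact ⟨hx.1, Finset.mem_insert_of_mem hx.2⟩)]
    refine Finset.sum_congr rfl fun x hx => ?_
    rw [Finsupp.erase_ne (Finset.mem_erase.mp hx).1]
  rw [h1, h2, Finset.sum_erase_add _ _ (Finset.mem_insert_self i _)]

lemma tnorm_zero : tnorm (0 : Fin n →₀ ℤ) = 0 := Finsupp.sum_zero_index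

lemma tnorm_single (i : Fin n) (z : ℤ) : tnorm (Finsupp.single i z) = z.natAbs := by
  have := tnorm_erase_add (Finsupp.single i z) i
  simpa [Finsupp.erase_single, tnorm_zero] using this.symm

lemma tnorm_shift (a : Fin n →₀ ℤ) (i : Fin n) (z : ℤ) :
    tnorm (a + Finsupp.single i z) + (a i).natAbs = tnorm a + (a i + z).natAbs := by
  have e1 := tnorm_erase_add (a + Finsupp.single i z) i
  have e2 := tnorm_erase_add a i
  rw [Finsupp.erase_add, Finsupp.erase_single, add_zero] at e1
  simp only [Finsupp.add_apply, Finsupp.single_eq_same] at e1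
  omega

lemma tnorm_add_le (a b : Fin n →₀ ℤ) : tnorm (a + b) ≤ tnorm a + tnorm b := by
  classical
  rw [tnorm_eq_sum (a + b) (a.support ∪ b.support) Finsupp.support_add,
    tnorm_eq_sum a (a.support ∪ b.support) Finset.subset_union_left,
    tnorm_eq_sum b (a.support ∪ b.support) Finset.subset_union_right,
    ← Finset.sum_add_distrib]
  exact Finset.sum_le_sum fun x _ => by simp only [Finsupp.add_apply]; exact Int.natAbs_add_le _ _

lemma tnorm_eq_zero {a : Fin n →₀ ℤ} (h : tnorm a = 0) : a = 0 := by
  ext i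
  have := tnorm_erase_add a i
  simp only [Finsupp.coe_zero, Pi.zero_apply]
  omega

lemma core1 (a : Fin n →₀ ℤ) (m : ℕ) (i : Fin n) (ε : ℤ) (hε : ε = 1 ∨ ε = -1)
    (h1 : tnorm a ≤ m) (h2 : tnorm (a + Finsupp.single i ε) ≤ m) :
    tnorm a + 1 ≤ m ∨ tnorm (a + Finsupp.single i ε) + 1 ≤ m := by
  have := tnorm_shift a i ε
  omega

lemma core2 (a : Fin n →₀ ℤ) (m : ℕ) (i i' : Fin n) (ε ε' : ℤ)
    (hε : ε = 1 ∨ ε = -1) (hε' : ε' = 1 ∨ ε' = -1) (hd : i = i' → ε = ε')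
    (h1 : tnorm a ≤ m)
    (h2 : tnorm (a + Finsupp.single i ε + Finsupp.single i' ε') ≤ m) :
    tnorm (a + Finsupp.single i ε) + 1 ≤ m ∨ tnorm (a + Finsupp.single i' ε') + 1 ≤ m := by
  by_cases hii : i = i'
  · subst hii
    obtain rfl := (hd rfl).symm
    rw [add_assoc, ← Finsupp.single_add] at h2
    have t1 := tnorm_shift a i ε'
    have t3 := tnorm_shift a i (ε' + ε')
    omega
  · have t1 := tnorm_shift a i ε
    have t2 := tnorm_shift a i' ε'
    have t3 := tnorm_shift (a + Finsupp.single i ε) i' ε'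
    rw [Finsupp.add_apply, Finsupp.single_apply, if_neg hii, add_zero] at t3
    omega




lemma expA_zero (n : ℕ) : expA n ⟨0, by omega⟩ = (1, 0) := by
  simp [expA]

lemma expA_pos {n : ℕ} (i : Fin n) :
    expA n ⟨(i : ℕ) + 1, by have := i.isLt; omega⟩ = (1, Finsupp.single i 1) := by
  have hi := i.isLt
  rw [expA]
  rw [dif_neg (by simp), dif_pos (by simpa using by omega)]
  congr 2
lemma expA_neg {n : ℕ} (i : Fin n) :
    expA n ⟨n + (i : ℕ) + 1, by have := i.isLt; omega⟩ = (1, Finsupp.single i (-1)) := by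
  have hi := i.isLt
  rw [expA]
  rw [dif_neg (by simp), dif_neg (by simp)]
  rw [← Finsupp.single_neg]
  have : (⟨(((⟨n + (i : ℕ) + 1, by omega⟩ : Fin (2*n+1)) : ℕ)) - 1 - n, by omega⟩ : Fin n) = i := by
    apply Fin.ext; simp
  rw [this]

lemma expA_cases {n : ℕ} (v : Fin (2*n+1)) :
    expA n v = (1, 0) ∨ ∃ (i : Fin n) (ε : ℤ), (ε = 1 ∨ ε = -1) ∧
      expA n v = (1, Finsupp.single i ε) := by
  have hv := v.isLt
  by_cases h0 : (v:ℕ) = 0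
  · left
    have : v = ⟨0, by omega⟩ := Fin.ext h0
    rw [this, expA_zero]
  by_cases hx : (v:ℕ) ≤ n
  · right
    obtain ⟨iv, hiv⟩ : ∃ iv : Fin n, (iv:ℕ) = (v:ℕ)-1 := ⟨⟨(v:ℕ)-1, by omega⟩, rfl⟩
    refine ⟨iv, 1, Or.inl rfl, ?_⟩
    have hveq : v = ⟨(iv:ℕ) + 1, by omega⟩ := by apply Fin.ext; simp; omega
    rw [hveq]
    exact expA_pos iv
  · right
    obtain ⟨iv, hiv⟩ : ∃ iv : Fin n, (iv:ℕ) = (v:ℕ)-1-n := ⟨⟨(v:ℕ)-1-n, by omega⟩, rfl⟩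
    refine ⟨iv, -1, Or.inr rfl, ?_⟩
    have hveq : v = ⟨n + (iv:ℕ) + 1, by omega⟩ := by apply Fin.ext; simp; omega
    rw [hveq]
    exact expA_neg iv

lemma expA_inj {n : ℕ} {v v' : Fin (2*n+1)} (h : expA n v = expA n v') : v = v' := by
  have hv := v.isLt; have hv' := v'.isLt
  apply Fin.ext
  rw [expA, expA] at h
  split_ifs at h with a1 a2 a3 a4 a5 a6 a7 a8 <;>
    rw [Prod.mk.injEq] at h <;> obtain ⟨-, h⟩ := h
  · omega
  · exact absurd h.symm (fun hz => one_ne_zero (Finsupp.single_eq_zero.mp hz))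
  · rw [eq_comm, neg_eq_zero] at h
    exact absurd h (fun hz => one_ne_zero (Finsupp.single_eq_zero.mp hz))
  · exact absurd h (fun hz => one_ne_zero (Finsupp.single_eq_zero.mp hz))
  · have h2 := Finsupp.single_left_injective (one_ne_zero (α := ℤ)) h
    have h3 : (v:ℕ)-1 = (v':ℕ)-1 := congrArg Fin.val h2
    omega
  · have h2 := DFunLike.congr_fun h ⟨(v:ℕ)-1, by omega⟩
    simp only [Finsupp.single_eq_same, Finsupp.neg_apply, Finsupp.single_apply] at h2
    split_ifs at h2 <;> omega
  · rw [neg_eq_zero] at h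
    exact absurd h (fun hz => one_ne_zero (Finsupp.single_eq_zero.mp hz))
  · have h2 := DFunLike.congr_fun h ⟨(v':ℕ)-1, by omega⟩
    simp only [Finsupp.single_eq_same, Finsupp.neg_apply, Finsupp.single_apply] at h2
    split_ifs at h2 <;> omega
  · rw [neg_inj] at h
    have h2 := Finsupp.single_left_injective (one_ne_zero (α := ℤ)) h
    have h3 : (v:ℕ)-1-n = (v':ℕ)-1-n := congrArg Fin.val h2
    omega

def SS (n : ℕ) : Set (LaurentExp n) := {e | tnorm e.2 ≤ e.1}

lemma zero_mem_SS {n : ℕ} : (0 : LaurentExp n) ∈ SS n := by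
  simp [SS, tnorm_zero]

lemma add_mem_SS {n : ℕ} {e f : LaurentExp n} (he : e ∈ SS n) (hf : f ∈ SS n) :
    e + f ∈ SS n := by
  simp only [SS, Set.mem_setOf_eq] at *
  calc tnorm (e + f).2 ≤ tnorm e.2 + tnorm f.2 := tnorm_add_le _ _
    _ ≤ e.1 + f.1 := by omega
    _ = (e + f).1 := rfl

lemma expA_mem_SS {n : ℕ} (v : Fin (2*n+1)) : expA n v ∈ SS n := by
  rcases expA_cases v with h | ⟨i, ε, hε, h⟩ <;> rw [h] <;>
    simp only [SS, Set.mem_setOf_eq, tnorm_zero, tnorm_single] <;> omega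

variable {K : Type} [Field K] {n : ℕ}

lemma support_subset_SS {x : LaurentRing K n} (hx : x ∈ ringA K n) :
    ∀ e ∈ x.coeff.support, e ∈ SS n := by
  have hx' : x ∈ Submodule.span K
      ((Submonoid.closure (Set.range fun v =>
        (AddMonoidAlgebra.single (expA n v) (1 : K) : LaurentRing K n))) : Set (LaurentRing K n)) := by
    rw [← Algebra.adjoin_eq_span]; exact hx
  refine Submodule.span_induction ?_ ?_ ?_ ?_ hx'
  · intro y hy
    refine Submonoid.closure_induction ?_ ?_ ?_ hy
    · rintro z ⟨v, rfl⟩ e he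
      rw [Finsupp.mem_support_iff] at he
      have : e = expA n v := by
        by_contra hne
        exact he (Finsupp.single_eq_of_ne' (Ne.symm hne))
      rw [this]; exact expA_mem_SS v
    · intro e he
      rw [AddMonoidAlgebra.one_def, Finsupp.mem_support_iff] at he
      have : e = 0 := by
        by_contra hne
        exact he (Finsupp.single_eq_of_ne' (Ne.symm hne))
      rw [this]; exact zero_mem_SS
    · intro y z hy hz hpy hpz e he
      have := AddMonoidAlgebra.support_coeff_mul_subset y z he
      rw [Finset.mem_add] at this
      obtain ⟨e1, he1, e2, he2, rfl⟩ := this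
      exact add_mem_SS (hpy e1 he1) (hpz e2 he2)
  · intro e he; simp at he
  · intro y z _ _ hpy hpz e he
    rcases Finset.mem_union.mp (Finsupp.support_add (show e ∈ (y.coeff + z.coeff).support from he)) with h | h
    · exact hpy e h
    · exact hpz e h
  · intro k y _ hpy e he
    exact hpy e (Finsupp.support_smul (show e ∈ (k • y.coeff).support from he))

lemma gen_mem_ringA (v : Fin (2*n+1)) :
    (AddMonoidAlgebra.single (expA n v) (1 : K) : LaurentRing K n) ∈ ringA K n :=
  Algebra.subset_adjoin (Set.mem_range_self v)

lemma single_e_mem_ringA {i : Fin n} {ε : ℤ} (hε : ε = 1 ∨ ε = -1) :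
    (AddMonoidAlgebra.single ((1, Finsupp.single i ε) : LaurentExp n) (1 : K) : LaurentRing K n)
      ∈ ringA K n := by
  rcases hε with rfl | rfl
  · rw [← expA_pos i]; exact gen_mem_ringA _
  · rw [← expA_neg i]; exact gen_mem_ringA _

lemma single_mem_ringA : ∀ (m : ℕ) (a : Fin n →₀ ℤ), tnorm a ≤ m →
    (AddMonoidAlgebra.single ((m, a) : LaurentExp n) (1 : K) : LaurentRing K n) ∈ ringA K n := by
  intro m
  induction m with
  | zero =>
    intro a ha
    obtain rfl : a = 0 := tnorm_eq_zero (Nat.le_zero.mp ha)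
    have h1 : (AddMonoidAlgebra.single ((0, 0) : LaurentExp n) (1 : K) : LaurentRing K n) = 1 :=
      rfl
    rw [h1]; exact one_mem _
  | succ m ih =>
    intro a ha
    by_cases h0 : a = 0
    · subst h0
      have h1 : (AddMonoidAlgebra.single ((m + 1, 0) : LaurentExp n) (1 : K) : LaurentRing K n)
          = AddMonoidAlgebra.single ((1, 0) : LaurentExp n) 1
            * AddMonoidAlgebra.single ((m, 0) : LaurentExp n) 1 := by
        have hexp : ((1, 0) : LaurentExp n) + (m, 0) = ((m + 1, 0) : LaurentExp n) := by
          rw [Prod.mk_add_mk]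
          exact Prod.ext (by simp; omega) (by simp)
        rw [AddMonoidAlgebra.single_mul_single, mul_one, hexp]
      rw [h1]
      refine mul_mem ?_ (ih 0 (by simp [tnorm_zero]))
      rw [← expA_zero n]; exact gen_mem_ringA _
    · obtain ⟨i, hi⟩ : ∃ i, a i ≠ 0 := by
        by_contra hc
        push_neg at hc
        exact h0 (Finsupp.ext fun i => hc i)
      set ε : ℤ := if 0 < a i then -1 else 1 with hεdef
      have hεcase : (0 < a i ∧ ε = -1) ∨ (a i < 0 ∧ ε = 1) := by
        rcases lt_trichotomy (a i) 0 with h | h | h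
        · right; exact ⟨h, by rw [hεdef, if_neg (by omega)]⟩
        · exact absurd h hi
        · left; exact ⟨h, by rw [hεdef, if_pos h]⟩
      have hshift := tnorm_shift a i ε
      have hkey : tnorm (a + Finsupp.single i ε) + 1 = tnorm a := by omega
      have h1 : (AddMonoidAlgebra.single ((m + 1, a) : LaurentExp n) (1 : K) : LaurentRing K n)
          = AddMonoidAlgebra.single ((1, Finsupp.single i (-ε)) : LaurentExp n) 1
            * AddMonoidAlgebra.single ((m, a + Finsupp.single i ε) : LaurentExp n) 1 := by
        have hexp : ((1, Finsupp.single i (-ε)) : LaurentExp n) + (m, a + Finsupp.single i ε)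
            = ((m + 1, a) : LaurentExp n) := by
          rw [Prod.mk_add_mk, Finsupp.single_neg]
          refine Prod.ext (by simp; omega) ?_
          simp only
          abel
        rw [AddMonoidAlgebra.single_mul_single, mul_one, hexp]
      rw [h1]
      refine mul_mem (single_e_mem_ringA ?_) (ih _ (by omega))
      rcases hεcase with ⟨-, h⟩ | ⟨-, h⟩
      · left; rw [h]; rfl
      · right; rw [h]

lemma expA_fst (v : Fin (2*n+1)) : (expA n v).1 = 1 := by
  rw [expA]; split_ifs <;> rfl

lemma exists_expA_single (i : Fin n) {ε : ℤ} (hε : ε = 1 ∨ ε = -1) :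
    ∃ v : Fin (2*n+1), expA n v = (1, Finsupp.single i ε) := by
  rcases hε with rfl | rfl
  · exact ⟨_, expA_pos i⟩
  · exact ⟨_, expA_neg i⟩

lemma comb {r : ℕ} {c : Fin r → Fin (2*n+1)} (hc : StrictMono c) {j k : Fin r} (hk : k < j)
    (av : Fin n →₀ ℤ) (m : ℕ) (h1 : tnorm av ≤ m)
    (h2 : tnorm (av + (expA n (c j)).2 - (expA n (c k)).2) ≤ m) :
    ∃ w : Fin (2*n+1),
      (∃ k' : Fin r, k' < j ∧ tnorm ((expA n w).2 + (expA n (c j)).2 - (expA n (c k')).2) ≤ 1)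
      ∧ tnorm (av - (expA n w).2) + 1 ≤ m := by
  have hcne : c j ≠ c k := fun h => absurd (hc.injective h) (ne_of_gt hk)
  rcases expA_cases (c j) with hj | ⟨ij, εj, hεj, hj⟩ <;>
    rcases expA_cases (c k) with hk' | ⟨ik, εk, hεk, hk'⟩
  · exact absurd (expA_inj (hj.trans hk'.symm)) hcne
  · -- vtj = 0, vtk = single ik εk
    rw [hj, hk'] at h2
    simp only at h2
    have h2' : tnorm (av + Finsupp.single ik (-εk)) ≤ m := by
      rw [Finsupp.single_neg]; rw [add_zero] at h2
      rw [sub_eq_add_neg] at h2; exact h2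
    rcases core1 av m ik (-εk) (by omega) h1 h2' with hcase | hcase
    · refine ⟨⟨0, by omega⟩, ⟨k, hk, ?_⟩, ?_⟩
      · rw [expA_zero, hj, hk']
        simp only [zero_add, add_zero]
        rw [zero_sub, ← Finsupp.single_neg, tnorm_single]
        omega
      · rw [expA_zero]; simpa using hcase
    · obtain ⟨w, hw⟩ := exists_expA_single ik hεk
      refine ⟨w, ⟨k, hk, ?_⟩, ?_⟩
      · rw [hw, hj, hk']
        simp only [add_zero]
        rw [sub_self, tnorm_zero]
        omega
      · rw [hw]
        simp only
        rw [sub_eq_add_neg, ← Finsupp.single_neg]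
        omega
  · -- vtj = single ij εj, vtk = 0
    rw [hj, hk'] at h2
    simp only at h2
    rw [sub_zero] at h2
    rcases core1 av m ij εj hεj h1 h2 with hcase | hcase
    · refine ⟨⟨0, by omega⟩, ⟨k, hk, ?_⟩, ?_⟩
      · rw [expA_zero, hj, hk']
        simp only [zero_add, sub_zero]
        rw [tnorm_single]
        omega
      · rw [expA_zero]; simpa using hcase
    · obtain ⟨w, hw⟩ := exists_expA_single ij (show -εj = 1 ∨ -εj = -1 by omega)
      refine ⟨w, ⟨k, hk, ?_⟩, ?_⟩
      · rw [hw, hj, hk']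
        simp only [sub_zero]
        rw [Finsupp.single_neg, neg_add_cancel, tnorm_zero]
        omega
      · rw [hw]
        simp only
        rw [Finsupp.single_neg, sub_neg_eq_add]
        omega
  · -- both single
    have hd : ij = ik → εj = -εk := by
      intro hii
      by_contra hne
      have heq : εj = εk := by omega
      exact hcne (expA_inj (by rw [hj, hk', hii, heq]))
    have h2' : tnorm (av + Finsupp.single ij εj + Finsupp.single ik (-εk)) ≤ m := by
      rw [hj, hk'] at h2
      simp only at h2
      rw [Finsupp.single_neg, ← sub_eq_add_neg]
      exact h2
    rcases core2 av m ij ik εj (-εk) hεj (by omega) hd h1 h2' with hcase | hcase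
    · obtain ⟨w, hw⟩ := exists_expA_single ij (show -εj = 1 ∨ -εj = -1 by omega)
      refine ⟨w, ⟨k, hk, ?_⟩, ?_⟩
      · rw [hw, hj, hk']
        simp only
        rw [Finsupp.single_neg, neg_add_cancel, zero_sub, ← Finsupp.single_neg, tnorm_single]
        omega
      · rw [hw]
        simp only
        rw [Finsupp.single_neg, sub_neg_eq_add]
        omega
    · obtain ⟨w, hw⟩ := exists_expA_single ik hεk
      refine ⟨w, ⟨k, hk, ?_⟩, ?_⟩
      · rw [hw, hj, hk']
        simp only
        rw [add_sub_cancel_left, tnorm_single]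
        omega
      · rw [hw]
        simp only
        rw [sub_eq_add_neg, ← Finsupp.single_neg]
        omega

set_option synthInstance.maxHeartbeats 1000000 in
set_option maxHeartbeats 1000000 in
lemma mem_ideal_support {r : ℕ} {c : Fin r → Fin (2*n+1)} {j : Fin r}
    {x : ringA K n}
    (hx : x ∈ Ideal.span ((fun k => ringAGen K n (c k)) '' {k : Fin r | k < j})) :
    ∀ e ∈ (x : LaurentRing K n).coeff.support,
      ∃ k : Fin r, k < j ∧ ∃ s ∈ SS n, e = expA n (c k) + s := by
  refine Submodule.span_induction ?_ ?_ ?_ ?_ hx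
  · rintro y ⟨k, hk, rfl⟩ e he
    simp only [ringAGen] at he
    rw [Finsupp.mem_support_iff] at he
    have : e = expA n (c k) := by
      by_contra hne
      exact he (Finsupp.single_eq_of_ne' (Ne.symm hne))
    exact ⟨k, hk, 0, zero_mem_SS, by rw [this, add_zero]⟩
  · intro e he; simp at he
  · intro y z _ _ hpy hpz e he
    have he' : e ∈ ((y : LaurentRing K n).coeff + (z : LaurentRing K n).coeff).support := he
    rcases Finset.mem_union.mp (Finsupp.support_add he') with h | h
    · exact hpy e h
    · exact hpz e h
  · intro a y _ hpy e he
    have he' : e ∈ ((a : LaurentRing K n) * y).coeff.support := by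
      rw [smul_eq_mul] at he; exact he
    obtain ⟨e1, he1, e2, he2, rfl⟩ := Finset.mem_add.mp (AddMonoidAlgebra.support_coeff_mul_subset _ _ he')
    obtain ⟨k, hk, s, hs, rfl⟩ := hpy e2 he2
    refine ⟨k, hk, s + e1, add_mem_SS hs (support_subset_SS a.2 e1 he1), ?_⟩
    rw [← add_assoc, add_comm e1, add_assoc, add_comm e1 s]

set_option synthInstance.maxHeartbeats 1000000 in
set_option maxHeartbeats 2000000 in
theorem An_stronglyKoszul_aux (K : Type) [Field K] (n : ℕ) (hn : 1 ≤ n) :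
    StronglyKoszulWith (ringAGen K n) := by
  intro r c hc j
  classical
  set u : Fin (2*n+1) → ringA K n := ringAGen K n with hu
  set W : Set (Fin (2*n+1)) :=
    {w | ∃ k' : Fin r, k' < j ∧
      tnorm ((expA n w).2 + (expA n (c j)).2 - (expA n (c k')).2) ≤ 1} with hW
  refine ⟨u '' W, ?_, ?_⟩
  · rintro _ ⟨w, -, rfl⟩; exact ⟨w, rfl⟩
  apply le_antisymm
  · -- colon ≤ span (u '' W)
    intro x hx
    have hxu : x * u (c j) ∈ Ideal.span ((fun k => u (c k)) '' {k : Fin r | k < j}) := by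
      have h := Submodule.mem_colon.mp hx (u (c j)) (Ideal.mem_span_singleton_self _)
      rwa [smul_eq_mul] at h
    have hsupp := mem_ideal_support hxu
    have hs : ∀ e ∈ (x : LaurentRing K n).coeff.support,
        ∃ k : Fin r, k < j ∧ tnorm (e.2 + (expA n (c j)).2 - (expA n (c k)).2) ≤ e.1 := by
      intro e he
      have hmem : e + expA n (c j)
          ∈ ((x * u (c j) : ringA K n) : LaurentRing K n).coeff.support := by
        have hcoe : ((x * u (c j) : ringA K n) : LaurentRing K n)
            = (x : LaurentRing K n) * AddMonoidAlgebra.single (expA n (c j)) (1:K) := rfl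
        rw [hcoe, AddMonoidAlgebra.support_coeff_mul_single _ _ (by simp) _]
        exact Finset.mem_map.mpr ⟨e, he, rfl⟩
      obtain ⟨k, hk, s, hsS, heq⟩ := hsupp _ hmem
      refine ⟨k, hk, ?_⟩
      have h1 : e.1 + 1 = 1 + s.1 := by
        have h := congrArg Prod.fst heq
        simpa [Prod.fst_add, expA_fst] using h
      have h2 : e.2 + (expA n (c j)).2 = (expA n (c k)).2 + s.2 := by
        have h := congrArg Prod.snd heq
        simpa [Prod.snd_add] using h
      have h3 : e.2 + (expA n (c j)).2 - (expA n (c k)).2 = s.2 := by rw [h2]; abel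
      rw [h3]
      have h4 := hsS
      simp only [SS, Set.mem_setOf_eq] at h4
      omega
    have main : ∀ (t : Finset (LaurentExp n)) (y : ringA K n),
        (y : LaurentRing K n).coeff.support ⊆ t →
        (∀ e ∈ (y : LaurentRing K n).coeff.support,
          ∃ k : Fin r, k < j ∧ tnorm (e.2 + (expA n (c j)).2 - (expA n (c k)).2) ≤ e.1) →
        y ∈ Ideal.span (u '' W) := by
      intro t
      induction t using Finset.induction_on with
      | empty =>
        intro y hsub _
        have hy0 : y = 0 := Subtype.ext (AddMonoidAlgebra.coeff_eq_zero.mp (Finsupp.support_eq_empty.mp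
          (Finset.subset_empty.mp hsub)))
        rw [hy0]; exact Ideal.zero_mem _
      | @insert a t ha ih =>
        intro y hsub hprop
        by_cases hay : a ∈ (y : LaurentRing K n).coeff.support
        · have haSS : a ∈ SS n := support_subset_SS y.2 a hay
          simp only [SS, Set.mem_setOf_eq] at haSS
          obtain ⟨k, hk, hky⟩ := hprop a hay
          obtain ⟨w, hwW, hwa⟩ := comb hc hk a.2 a.1 haSS hky
          have hm1 : 1 ≤ a.1 := by omega
          set cA : K := (y : LaurentRing K n).coeff a with hcA
          have hzmem : (AddMonoidAlgebra.single
              ((a.1 - 1, a.2 - (expA n w).2) : LaurentExp n) (1:K) : LaurentRing K n)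
                ∈ ringA K n :=
            single_mem_ringA (a.1 - 1) _ (by omega)
          set z : ringA K n := ⟨_, hzmem⟩ with hz
          set term : ringA K n := cA • (u w * z) with hterm
          have htermval : (term : LaurentRing K n) = AddMonoidAlgebra.single a cA := by
            have huwz : ((u w * z : ringA K n) : LaurentRing K n)
                = AddMonoidAlgebra.single a (1:K) := by
              have hcoe : ((u w * z : ringA K n) : LaurentRing K n)
                  = AddMonoidAlgebra.single (expA n w) (1:K)
                    * AddMonoidAlgebra.single
                      ((a.1 - 1, a.2 - (expA n w).2) : LaurentExp n) (1:K) := rfl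
              rw [hcoe, AddMonoidAlgebra.single_mul_single, mul_one]
              congr 1
              refine Prod.ext ?_ ?_
              · simp only [Prod.fst_add]; rw [expA_fst]; omega
              · simp only [Prod.snd_add]; abel
            calc ((cA • (u w * z) : ringA K n) : LaurentRing K n)
                = cA • ((u w * z : ringA K n) : LaurentRing K n) := rfl
              _ = cA • (AddMonoidAlgebra.single a (1:K)) := by rw [huwz]
              _ = AddMonoidAlgebra.single a cA := by
                  rw [AddMonoidAlgebra.smul_single, smul_eq_mul, mul_one]
          have htermmem : term ∈ Ideal.span (u '' W) := by
            rw [hterm]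
            exact Submodule.smul_of_tower_mem _ cA
              (Ideal.mul_mem_right z _ (Ideal.subset_span ⟨w, hwW, rfl⟩))
          have hycoe : ∀ e, ((y - term : ringA K n) : LaurentRing K n).coeff e
              = (y : LaurentRing K n).coeff e - (AddMonoidAlgebra.single a cA).coeff e := by
            intro e
            have : ((y - term : ringA K n) : LaurentRing K n)
                = (y : LaurentRing K n) - (term : LaurentRing K n) := rfl
            rw [this, htermval]; rfl
          have hrest : y = (y - term) + term := by ring
          rw [hrest]
          refine Ideal.add_mem _ (ih (y - term) ?_ ?_) htermmem
          · intro e he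
            have hev := Finsupp.mem_support_iff.mp he
            rw [hycoe] at hev
            by_cases hea : e = a
            · exfalso; apply hev
              rw [hea, AddMonoidAlgebra.coeff_single, Finsupp.single_eq_same, hcA, sub_self]
            · have hey : (y : LaurentRing K n).coeff e ≠ 0 := by
                rwa [AddMonoidAlgebra.coeff_single, Finsupp.single_eq_of_ne' (Ne.symm hea), sub_zero] at hev
              rcases Finset.mem_insert.mp (hsub (Finsupp.mem_support_iff.mpr hey)) with h | h
              · exact absurd h hea
              · exact h
          · intro e he
            have hev := Finsupp.mem_support_iff.mp he
            rw [hycoe] at hev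
            by_cases hea : e = a
            · exfalso; apply hev
              rw [hea, AddMonoidAlgebra.coeff_single, Finsupp.single_eq_same, hcA, sub_self]
            · have hey : (y : LaurentRing K n).coeff e ≠ 0 := by
                rwa [AddMonoidAlgebra.coeff_single, Finsupp.single_eq_of_ne' (Ne.symm hea), sub_zero] at hev
              exact hprop e (Finsupp.mem_support_iff.mpr hey)
        · refine ih y ?_ hprop
          intro e he
          rcases Finset.mem_insert.mp (hsub he) with h | h
          · exact absurd (h ▸ he) hay
          · exact h
    exact main _ x (Finset.Subset.refl _) hs
  · rw [Ideal.span_le]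
    rintro _ ⟨w, ⟨k, hk, hwk⟩, rfl⟩
    rw [SetLike.mem_coe, Submodule.mem_colon]
    intro p hp
    obtain ⟨y, rfl⟩ := Ideal.mem_span_singleton'.mp hp
    rw [smul_eq_mul]
    have hzmem : (AddMonoidAlgebra.single
        ((1, (expA n w).2 + (expA n (c j)).2 - (expA n (c k)).2) : LaurentExp n)
          (1:K) : LaurentRing K n) ∈ ringA K n :=
      single_mem_ringA 1 _ hwk
    set z : ringA K n := ⟨_, hzmem⟩ with hz
    have hprod : u w * u (c j) = u (c k) * z := by
      apply Subtype.ext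
      have h1 : ((u w * u (c j) : ringA K n) : LaurentRing K n)
          = AddMonoidAlgebra.single (expA n w + expA n (c j)) (1:K) := by
        have hcoe : ((u w * u (c j) : ringA K n) : LaurentRing K n)
            = AddMonoidAlgebra.single (expA n w) (1:K)
              * AddMonoidAlgebra.single (expA n (c j)) (1:K) := rfl
        rw [hcoe, AddMonoidAlgebra.single_mul_single, mul_one]
      have h2 : ((u (c k) * z : ringA K n) : LaurentRing K n)
          = AddMonoidAlgebra.single (expA n (c k)
            + ((1, (expA n w).2 + (expA n (c j)).2 - (expA n (c k)).2) : LaurentExp n))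
              (1:K) := by
        have hcoe : ((u (c k) * z : ringA K n) : LaurentRing K n)
            = AddMonoidAlgebra.single (expA n (c k)) (1:K)
              * AddMonoidAlgebra.single
                ((1, (expA n w).2 + (expA n (c j)).2 - (expA n (c k)).2) : LaurentExp n)
                  (1:K) := rfl
        rw [hcoe, AddMonoidAlgebra.single_mul_single, mul_one]
      rw [h1, h2]
      congr 1
      refine Prod.ext ?_ ?_
      · simp only [Prod.fst_add]; rw [expA_fst, expA_fst, expA_fst]
      · simp only [Prod.snd_add]; abel
    have hre : u w * (y * u (c j)) = (y * z) * u (c k) := by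
      calc u w * (y * u (c j)) = y * (u w * u (c j)) := by ring
        _ = y * (u (c k) * z) := by rw [hprod]
        _ = (y * z) * u (c k) := by ring
    rw [hre]
    exact Ideal.mul_mem_left _ _ (Ideal.subset_span ⟨k, hk, rfl⟩)

/-- **Example 1.4.**  The toric ring
`K[A_n] = K[s, t_1 s, …, t_n s, t_1⁻¹ s, …, t_n⁻¹ s]` is strongly Koszul
(with respect to its distinguished degree-one system of generators). -/
theorem An_stronglyKoszul (K : Type) [Field K] (n : ℕ) (hn : 1 ≤ n) :
    StronglyKoszulWith (ringAGen K n) :=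
  An_stronglyKoszul_aux K n hn

end
end

section
/- Let K be a field and n ≥ 1. The toric ring K[B_n] = K[t_1 s, ..., t_n s, t_1^{-1} s, ..., t_n^{-1} s] ⊆ K[s, t_1^{±1}, ..., t_n^{±1}] is strongly Koszul. -/
/-!
Common definitions: toric ideals/rings of monomial families, strong Koszulness
with respect to a system of algebra generators, initial ideals with respect to
a relation on exponent vectors, (reduced) Gröbner bases, the (graded) reverse
lexicographic order induced by an ordering of the variables, minimal monomial
generators, and compressedness.
-/

open MvPolynomial

open MvPolynomial

noncomputable section

/-- The exponent vectors of the monomials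
`B_n = {t_1 s, …, t_n s, t_1⁻¹ s, …, t_n⁻¹ s}`: index `i` with `0 ≤ i < n`
gives `t_{i+1} s`, and index `n + i` gives `t_{i+1}⁻¹ s`. -/
def expB (n : ℕ) (m : Fin (2 * n)) : LaurentExp n :=
  if hx : (m : ℕ) < n then (1, Finsupp.single ⟨(m : ℕ), hx⟩ 1)
  else (1, - Finsupp.single ⟨(m : ℕ) - n, by have := m.isLt; omega⟩ 1)

/-- The toric ring `K[B_n] = K[t_1 s, …, t_n s, t_1⁻¹ s, …, t_n⁻¹ s]`,
as a subalgebra of the Laurent polynomial ring. -/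
def ringB (K : Type) [Field K] (n : ℕ) : Subalgebra K (LaurentRing K n) :=
  Algebra.adjoin K
    (Set.range fun v => (AddMonoidAlgebra.single (expB n v) (1 : K) : LaurentRing K n))

/-- The generators of `K[B_n]`, as elements of `K[B_n]`. -/
def ringBGen (K : Type) [Field K] (n : ℕ) (v : Fin (2 * n)) : ringB K n :=
  ⟨AddMonoidAlgebra.single (expB n v) (1 : K),
    Algebra.subset_adjoin (Set.mem_range_self v)⟩

namespace BnAux
set_option synthInstance.maxHeartbeats 1000000
set_option maxHeartbeats 1000000

abbrev LaurentExp (n : ℕ) := ℕ × (Fin n →₀ ℤ)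

def wt {n : ℕ} (a : Fin n →₀ ℤ) : ℤ := ∑ i, |a i|
def sg {n : ℕ} (a : Fin n →₀ ℤ) : ℤ := ∑ i, a i

variable {n : ℕ}

lemma wt_nonneg (a : Fin n →₀ ℤ) : 0 ≤ wt a :=
  Finset.sum_nonneg fun i _ => abs_nonneg _

lemma wt_zero : wt (0 : Fin n →₀ ℤ) = 0 := by simp [wt]

lemma sg_zero : sg (0 : Fin n →₀ ℤ) = 0 := by simp [sg]

lemma wt_add_le (a b : Fin n →₀ ℤ) : wt (a + b) ≤ wt a + wt b := by
  rw [wt, wt, wt, ← Finset.sum_add_distrib]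
  exact Finset.sum_le_sum fun i _ => by simpa [Finsupp.add_apply] using abs_add_le (a i) (b i)

lemma sg_add (a b : Fin n →₀ ℤ) : sg (a + b) = sg a + sg b := by
  rw [sg, sg, sg, ← Finset.sum_add_distrib]
  exact Finset.sum_congr rfl fun i _ => by simp [Finsupp.add_apply]

lemma sg_single (i : Fin n) (s : ℤ) : sg (Finsupp.single i s) = s := by
  simp [sg, Finsupp.single_apply]

lemma wt_add_single (a : Fin n →₀ ℤ) (i : Fin n) (s : ℤ) :
    wt (a + Finsupp.single i s) = wt a - |a i| + |a i + s| := by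
  rw [wt, wt, ← Finset.add_sum_erase _ _ (Finset.mem_univ i),
    ← Finset.add_sum_erase _ (fun j => |a j|) (Finset.mem_univ i)]
  have h1 : ∀ j ∈ Finset.univ.erase i, |(a + Finsupp.single i s) j| = |a j| := by
    intro j hj
    have hji : j ≠ i := (Finset.mem_erase.1 hj).1
    simp [Finsupp.add_apply, Finsupp.single_apply, Ne.symm hji]
  rw [Finset.sum_congr rfl h1]
  simp [Finsupp.add_apply]
  ring

lemma eq_zero_of_wt_le_zero {a : Fin n →₀ ℤ} (h : wt a ≤ 0) : a = 0 := by
  have := (Finset.sum_eq_zero_iff_of_nonneg (fun i _ => abs_nonneg (a i))).1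
    (le_antisymm h (wt_nonneg a))
  ext i
  simpa using abs_eq_zero.mp (this i (Finset.mem_univ i))



lemma wt_single (i : Fin n) (s : ℤ) : wt (Finsupp.single i s) = |s| := by
  have h := wt_add_single 0 i s
  simpa [wt_zero] using h

def Mset (n : ℕ) : AddSubmonoid (LaurentExp n) :=
  AddSubmonoid.closure (Set.range (expB n))

lemma expB_eq (v : Fin (2*n)) : ∃ (i : Fin n) (s : ℤ),
    expB n v = (1, Finsupp.single i s) ∧ (s = 1 ∨ s = -1) := by
  unfold expB
  split_ifs with h
  · exact ⟨⟨(v:ℕ), h⟩, 1, rfl, Or.inl rfl⟩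
  · refine ⟨⟨(v:ℕ) - n, by have := v.isLt; omega⟩, -1, ?_, Or.inr rfl⟩
    rw [Finsupp.single_neg]

def flipB (v : Fin (2*n)) : Fin (2*n) :=
  if _h : (v:ℕ) < n then ⟨(v:ℕ) + n, by omega⟩
  else ⟨(v:ℕ) - n, by have := v.isLt; omega⟩

lemma expB_flipB (v : Fin (2*n)) : expB n (flipB v) = (1, -(expB n v).2) := by
  have hlt := v.isLt
  unfold flipB expB
  split_ifs with h1 h2 h2
  · exfalso; simp at h2
  · simp only [Prod.mk.injEq, true_and, neg_inj]
    congr 1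
    ext
    simp
  · simp only [Prod.mk.injEq, neg_neg, true_and]
  · exfalso; simp at h2; omega

lemma expB_inj : Function.Injective (expB n) := by
  intro v w h
  unfold expB at h
  split_ifs at h with h1 h2 h2
  · have h' := congrArg Prod.snd h
    simp only at h'
    have := (Finsupp.single_left_inj (one_ne_zero)).1 h'
    apply Fin.ext
    simpa using congrArg Fin.val this
  · have h' := DFunLike.congr_fun (congrArg Prod.snd h) ⟨(v:ℕ), h1⟩
    simp [Finsupp.single_apply] at h'
    split_ifs at h' <;> omega
  · have h' := DFunLike.congr_fun (congrArg Prod.snd h) ⟨(w:ℕ), h2⟩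
    simp [Finsupp.single_apply] at h'
    split_ifs at h' <;> omega
  · have h' := congrArg Prod.snd h
    simp only [neg_inj] at h'
    have := (Finsupp.single_left_inj (one_ne_zero)).1 h'
    have hv := v.isLt; have hw := w.isLt
    apply Fin.ext
    have := congrArg Fin.val this
    simp at this
    omega

lemma expB_mem (v : Fin (2*n)) : expB n v ∈ Mset n :=
  AddSubmonoid.subset_closure ⟨v, rfl⟩

lemma mem_M {p : LaurentExp n} (hp : p ∈ Mset n) :
    wt p.2 ≤ (p.1 : ℤ) ∧ (2:ℤ) ∣ ((p.1:ℤ) - sg p.2) := by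
  induction hp using AddSubmonoid.closure_induction with
  | mem x hx =>
      obtain ⟨v, rfl⟩ := hx
      obtain ⟨i, s, hE, hs⟩ := expB_eq v
      rw [hE]
      refine ⟨?_, ?_⟩
      · rw [wt_single]; rcases hs with rfl|rfl <;> norm_num
      · rw [sg_single]; rcases hs with rfl|rfl <;> norm_num
  | zero => simp [wt_zero, sg_zero]
  | add x y hx hy ihx ihy =>
      obtain ⟨hx1, hx2⟩ := ihx; obtain ⟨hy1, hy2⟩ := ihy
      constructor
      · calc wt (x + y).2 ≤ wt x.2 + wt y.2 := by rw [Prod.snd_add]; exact wt_add_le _ _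
          _ ≤ (x.1 : ℤ) + (y.1 : ℤ) := by linarith
          _ = ((x + y).1 : ℤ) := by rw [Prod.fst_add]; push_cast; ring
      · rw [Prod.snd_add, sg_add, Prod.fst_add]
        push_cast
        omega

lemma M_of (hn : 1 ≤ n) : ∀ (d : ℕ) (a : Fin n →₀ ℤ), wt a ≤ (d:ℤ) →
    (2:ℤ) ∣ ((d:ℤ) - sg a) → ((d, a) : LaurentExp n) ∈ Mset n := by
  intro d
  induction d with
  | zero =>
      intro a h1 _h2
      have ha : a = 0 := eq_zero_of_wt_le_zero (by exact_mod_cast h1)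
      subst ha
      exact zero_mem _
  | succ d ih =>
      intro a h1 h2
      by_cases ha : a = 0
      · subst ha
        have hd : 1 ≤ d := by
          rw [sg_zero] at h2; push_cast at h2; omega
        set i : Fin n := ⟨0, by omega⟩ with hidef
        have hmem : ((d, Finsupp.single i (-1)) : LaurentExp n) ∈ Mset n := by
          apply ih
          · rw [wt_single]; norm_num; exact_mod_cast hd
          · rw [sg_single, sg_zero] at *
            push_cast at h2 ⊢; omega
        have h0lt : (0:ℕ) < 2*n := by omega
        have hgen : expB n ⟨0, h0lt⟩ ∈ Mset n := expB_mem _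
        have hE : expB n ⟨0, h0lt⟩ = ((1, Finsupp.single i 1) : LaurentExp n) := by
          unfold expB
          rw [dif_pos (by show 0 < n; omega)]
        rw [hE] at hgen
        have hsum := AddSubmonoid.add_mem _ hgen hmem
        have hpe : (((d+1 : ℕ), (0 : Fin n →₀ ℤ)) : LaurentExp n)
            = ((1:ℕ), Finsupp.single i 1) + ((d:ℕ), Finsupp.single i (-1)) := by
          rw [Prod.mk_add_mk, Prod.ext_iff]
          refine ⟨by simp [Nat.add_comm], ?_⟩
          simp only
          rw [← Finsupp.single_add]
          norm_num
        rw [hpe]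
        exact hsum
      · obtain ⟨i, hi⟩ : ∃ i, a i ≠ 0 := by
          by_contra h; push_neg at h
          exact ha (Finsupp.ext fun j => h j)
        rcases lt_or_gt_of_ne hi with hneg | hpos
        · have hvlt : n + (i:ℕ) < 2*n := by have := i.isLt; omega
          have hv : expB n ⟨n + (i:ℕ), hvlt⟩ = (1, Finsupp.single i (-1)) := by
            unfold expB
            rw [dif_neg (by simp)]
            rw [Prod.ext_iff]
            refine ⟨rfl, ?_⟩
            simp only
            rw [← Finsupp.single_neg]
            congr 1
            ext
            simp
          have hmem : ((d, a + Finsupp.single i 1) : LaurentExp n) ∈ Mset n := by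
            apply ih
            · rw [wt_add_single]
              have hiv : |a i + 1| = |a i| - 1 := by
                simp only [Int.abs_eq_natAbs] at *; omega
              rw [hiv]
              push_cast at h1 ⊢; linarith
            · rw [sg_add, sg_single]; push_cast at h2 ⊢; omega
          have hgen := expB_mem (n := n) ⟨n + (i:ℕ), hvlt⟩
          rw [hv] at hgen
          have hsum := AddSubmonoid.add_mem _ hgen hmem
          have hpe : (((d+1 : ℕ), a) : LaurentExp n)
              = ((1:ℕ), Finsupp.single i (-1)) + ((d:ℕ), a + Finsupp.single i 1) := by
            rw [Prod.mk_add_mk, Prod.ext_iff]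
            refine ⟨by simp [Nat.add_comm], ?_⟩
            simp only
            rw [add_comm a, ← add_assoc, ← Finsupp.single_add]
            norm_num
          rw [hpe]
          exact hsum
        · have hvlt : (i:ℕ) < 2*n := by have := i.isLt; omega
          have hv : expB n ⟨(i:ℕ), hvlt⟩ = (1, Finsupp.single i 1) := by
            unfold expB
            rw [dif_pos (by simpa using i.isLt)]
          have hmem : ((d, a + Finsupp.single i (-1)) : LaurentExp n) ∈ Mset n := by
            apply ih
            · rw [wt_add_single]
              have hiv : |a i + -1| = |a i| - 1 := by
                simp only [Int.abs_eq_natAbs] at *; omega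
              rw [hiv]
              push_cast at h1 ⊢; linarith
            · rw [sg_add, sg_single]; push_cast at h2 ⊢; omega
          have hgen := expB_mem (n := n) ⟨(i:ℕ), hvlt⟩
          rw [hv] at hgen
          have hsum := AddSubmonoid.add_mem _ hgen hmem
          have hpe : (((d+1 : ℕ), a) : LaurentExp n)
              = ((1:ℕ), Finsupp.single i 1) + ((d:ℕ), a + Finsupp.single i (-1)) := by
            rw [Prod.mk_add_mk, Prod.ext_iff]
            refine ⟨by simp [Nat.add_comm], ?_⟩
            simp only
            rw [add_comm a, ← add_assoc, ← Finsupp.single_add]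
            norm_num
          rw [hpe]
          exact hsum

lemma mem_M_iff (hn : 1 ≤ n) {p : LaurentExp n} :
    p ∈ Mset n ↔ wt p.2 ≤ (p.1 : ℤ) ∧ (2:ℤ) ∣ ((p.1:ℤ) - sg p.2) :=
  ⟨mem_M, fun ⟨h1, h2⟩ => by
    have := M_of hn p.1 p.2 h1 h2
    simpa using this⟩


section Ring
variable {K : Type} [Field K]

lemma single_one_mem_ringB {m : LaurentExp n} (hm : m ∈ Mset n) :
    (AddMonoidAlgebra.single m (1:K) : LaurentRing K n) ∈ ringB K n := by
  induction hm using AddSubmonoid.closure_induction with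
  | mem x hx => exact Algebra.subset_adjoin (by obtain ⟨v, rfl⟩ := hx; exact ⟨v, rfl⟩)
  | zero =>
      have h1 : (AddMonoidAlgebra.single (0 : LaurentExp n) (1:K) : LaurentRing K n) = 1 := rfl
      rw [h1]; exact one_mem _
  | add x y hx hy ihx ihy =>
      have h1 : (AddMonoidAlgebra.single (x + y) (1:K) : LaurentRing K n)
          = AddMonoidAlgebra.single x (1:K) * AddMonoidAlgebra.single y (1:K) := by
        rw [AddMonoidAlgebra.single_mul_single, one_mul]
      rw [h1]; exact mul_mem ihx ihy

lemma single_mem_ringB {m : LaurentExp n} (hm : m ∈ Mset n) (c : K) :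
    (AddMonoidAlgebra.single m c : LaurentRing K n) ∈ ringB K n := by
  have h1 : (AddMonoidAlgebra.single m c : LaurentRing K n)
      = c • AddMonoidAlgebra.single m (1:K) := by
    rw [AddMonoidAlgebra.smul_single, smul_eq_mul, mul_one]
  rw [h1]
  exact Subalgebra.smul_mem _ (single_one_mem_ringB hm) c

lemma support_mem_M {x : LaurentRing K n} (hx : x ∈ ringB K n) :
    ∀ m ∈ x.coeff.support, m ∈ Mset n := by
  induction hx using Algebra.adjoin_induction with
  | mem x hx =>
      obtain ⟨v, rfl⟩ := hx
      intro m hm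
      have h1 := Finsupp.support_single_subset hm
      rw [Finset.mem_singleton] at h1
      rw [h1]; exact expB_mem v
  | algebraMap r =>
      intro m hm
      have h1 : (algebraMap K (LaurentRing K n) r)
          = AddMonoidAlgebra.single (0 : LaurentExp n) r := by
        rw [AddMonoidAlgebra.coe_algebraMap]; rfl
      rw [h1] at hm
      have h2 := Finsupp.support_single_subset hm
      rw [Finset.mem_singleton] at h2
      rw [h2]; exact zero_mem _
  | add x y hx hy ihx ihy =>
      intro m hm
      rcases Finset.mem_union.1 (Finsupp.support_add hm) with h|h
      exacts [ihx m h, ihy m h]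
  | mul x y hx hy ihx ihy =>
      intro m hm
      obtain ⟨p, hp, q, hq, rfl⟩ := Finset.mem_add.1 (AddMonoidAlgebra.support_coeff_mul_subset x y hm)
      exact add_mem (ihx p hp) (ihy q hq)

lemma mem_ringB_of_support {x : LaurentRing K n} (h : ∀ m ∈ x.coeff.support, m ∈ Mset n) :
    x ∈ ringB K n := by
  have hx : x = ∑ m ∈ x.coeff.support, AddMonoidAlgebra.single m (x.coeff m) := by
    conv_lhs => rw [← AddMonoidAlgebra.sum_coeff_single x]
    rfl
  have h2 : (∑ m ∈ x.coeff.support, AddMonoidAlgebra.single m (x.coeff m)) ∈ ringB K n :=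
    sum_mem fun m hm => single_mem_ringB (h m hm) _
  rwa [← hx] at h2

lemma mem_span_gen_iff {s : Set (Fin (2*n))} {f : ringB K n} :
    f ∈ Ideal.span (ringBGen K n '' s) ↔
      ∀ m ∈ (f : LaurentRing K n).coeff.support, ∃ v ∈ s, ∃ p ∈ Mset n, m = expB n v + p := by
  constructor
  · intro hf
    induction hf using Submodule.span_induction with
    | mem x hx =>
        obtain ⟨v, hv, rfl⟩ := hx
        intro m hm
        have h1 : m ∈ (AddMonoidAlgebra.single (expB n v) (1:K) : LaurentRing K n).coeff.support := hm
        have h2 := Finsupp.support_single_subset h1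
        rw [Finset.mem_singleton] at h2
        exact ⟨v, hv, 0, zero_mem _, by rw [h2, add_zero]⟩
    | zero =>
        intro m hm
        simp at hm
    | add x y hx hy ihx ihy =>
        intro m hm
        have h1 : m ∈ ((x : LaurentRing K n) + (y : LaurentRing K n)).coeff.support := hm
        rcases Finset.mem_union.1 (Finsupp.support_add h1) with h|h
        exacts [ihx m h, ihy m h]
    | smul r x hx ihx =>
        intro m hm
        have h1 : m ∈ ((r : LaurentRing K n) * (x : LaurentRing K n)).coeff.support := hm
        obtain ⟨p, hp, q, hq, rfl⟩ := Finset.mem_add.1 (AddMonoidAlgebra.support_coeff_mul_subset _ _ h1)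
        obtain ⟨v, hv, q', hq', rfl⟩ := ihx q hq
        exact ⟨v, hv, p + q', add_mem (support_mem_M r.2 p hp) hq', by
          rw [add_left_comm]⟩
  · intro h
    have key : ∀ m ∈ (f : LaurentRing K n).coeff.support,
        ∃ g : ringB K n, g ∈ Ideal.span (ringBGen K n '' s) ∧
          (g : LaurentRing K n) = AddMonoidAlgebra.single m ((f : LaurentRing K n).coeff m) := by
      intro m hm
      obtain ⟨v, hv, p, hp, rfl⟩ := h m hm
      set c : K := (f : LaurentRing K n).coeff (expB n v + p) with hc
      refine ⟨(⟨AddMonoidAlgebra.single p c, single_mem_ringB hp c⟩ :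
          ringB K n) * ringBGen K n v,
        Ideal.mul_mem_left _ _ (Ideal.subset_span ⟨v, hv, rfl⟩), ?_⟩
      show AddMonoidAlgebra.single p c * AddMonoidAlgebra.single (expB n v) (1:K) = _
      rw [AddMonoidAlgebra.single_mul_single, mul_one, add_comm]
    choose g hg hgc using key
    have hfs : f = ∑ m ∈ (f : LaurentRing K n).coeff.support.attach, g m.1 m.2 := by
      apply Subtype.ext
      rw [AddSubmonoidClass.coe_finset_sum]
      rw [Finset.sum_congr rfl fun m _ => hgc m.1 m.2]
      rw [Finset.sum_attach ((f : LaurentRing K n).coeff.support)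
        (fun m => AddMonoidAlgebra.single m ((f : LaurentRing K n).coeff m))]
      exact (AddMonoidAlgebra.sum_coeff_single (f : LaurentRing K n)).symm
    rw [hfs]
    exact sum_mem fun m _ => hg m.1 m.2

end Ring

lemma wt_sub_single (a : Fin n →₀ ℤ) (i : Fin n) (s : ℤ) :
    wt (a - Finsupp.single i s) = wt a - |a i| + |a i - s| := by
  rw [sub_eq_add_neg, ← Finsupp.single_neg, wt_add_single, ← sub_eq_add_neg]

lemma sg_sub_single (a : Fin n →₀ ℤ) (i : Fin n) (s : ℤ) :
    sg (a - Finsupp.single i s) = sg a - s := by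
  rw [sub_eq_add_neg, ← Finsupp.single_neg, sg_add, sg_single, ← sub_eq_add_neg]

lemma comb (hn : 1 ≤ n) {v w : Fin (2*n)} (hvw : v ≠ w) {m p : LaurentExp n}
    (hm : m ∈ Mset n) (hp : p ∈ Mset n) (heq : m + expB n w = expB n v + p) :
    (∃ q ∈ Mset n, m = expB n v + q) ∨ (∃ q ∈ Mset n, m = expB n (flipB w) + q) := by
  obtain ⟨i, s, hvE, hs⟩ := expB_eq v
  obtain ⟨k, t, hwE, ht⟩ := expB_eq w
  obtain ⟨d, a⟩ := m
  obtain ⟨d', a'⟩ := p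
  rw [hvE, hwE, Prod.mk_add_mk, Prod.mk_add_mk, Prod.ext_iff] at heq
  obtain ⟨hdeq, haeq⟩ := heq
  dsimp only at hdeq haeq
  have hd2 : d = d' := by omega
  subst hd2
  have ha' : a' = a + Finsupp.single k t - Finsupp.single i s := by
    rw [haeq]; abel
  subst ha'
  obtain ⟨hm1, hm2⟩ := (mem_M_iff hn).1 hm
  obtain ⟨hp1, hp2⟩ := (mem_M_iff hn).1 hp
  dsimp only at hm1 hm2 hp1 hp2
  clear hm hp
  have hd1 : 1 ≤ d := by
    by_contra hd0
    push_neg at hd0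
    have hd00 : d = 0 := by omega
    subst hd00
    have ha0 : a = 0 := eq_zero_of_wt_le_zero (by exact_mod_cast hm1)
    subst ha0
    have h00 : Finsupp.single k t - Finsupp.single i s = 0 :=
      eq_zero_of_wt_le_zero (by simpa using hp1)
    rw [sub_eq_zero] at h00
    rcases (Finsupp.single_eq_single_iff _ _ _ _).1 h00 with ⟨hik, hts⟩ | ⟨ht0, _⟩
    · exact hvw (expB_inj (by rw [hvE, hwE, hik, hts]))
    · rcases ht with rfl|rfl <;> norm_num at ht0
  rcases (show (|a k + t| = |a k| + 1 ∧ |a k + 2*t| = |a k| + 2) ∨ |a k + t| = |a k| - 1 from by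
      simp only [Int.abs_eq_natAbs]; rcases ht with rfl | rfl <;> omega) with ⟨hA, hA2⟩ | hA
  · -- left disjunct
    left
    refine ⟨((d-1 : ℕ), a - Finsupp.single i s), ?_, ?_⟩
    · rw [mem_M_iff hn]
      dsimp only
      have hcast : ((d - 1 : ℕ) : ℤ) = (d : ℤ) - 1 := by
        push_cast [hd1]; ring
      constructor
      · rw [hcast, wt_sub_single]
        by_cases hik : i = k
        · subst hik
          have hst : s = -t := by
            rcases hs with rfl|rfl <;> rcases ht with rfl|rfl <;> first
              | rfl
              | (exfalso; exact hvw (expB_inj (by rw [hvE, hwE])))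
          subst hst
          have he1 : a + Finsupp.single i t - Finsupp.single i (-t)
              = a + Finsupp.single i (2*t) := by
            rw [sub_eq_add_neg, ← Finsupp.single_neg, neg_neg, add_assoc, ← Finsupp.single_add]
            ring_nf
          rw [he1, wt_add_single, hA2] at hp1
          have hit : |a i - -t| = |a i| + 1 := by
            rw [sub_neg_eq_add]; exact hA
          rw [hit]
          linarith
        · have he1 : a + Finsupp.single k t - Finsupp.single i s
              = (a - Finsupp.single i s) + Finsupp.single k t := by abel
          have hak : (a - Finsupp.single i s) k = a k := by
            rw [Finsupp.sub_apply, Finsupp.single_apply, if_neg hik, sub_zero]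
          rw [he1, wt_add_single, hak, hA, wt_sub_single] at hp1
          linarith
      · rw [hcast, sg_sub_single]
        rcases hs with rfl|rfl <;> omega
    · rw [hvE, Prod.mk_add_mk, Prod.ext_iff]
      refine ⟨by dsimp only; omega, ?_⟩
      dsimp only
      abel
  · -- right disjunct
    right
    refine ⟨((d-1 : ℕ), a + Finsupp.single k t), ?_, ?_⟩
    · rw [mem_M_iff hn]
      dsimp only
      have hcast : ((d - 1 : ℕ) : ℤ) = (d : ℤ) - 1 := by
        push_cast [hd1]; ring
      constructor
      · rw [hcast, wt_add_single, hA]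
        linarith
      · rw [hcast, sg_add, sg_single]
        rcases ht with rfl|rfl <;> omega
    · rw [expB_flipB, hwE, Prod.mk_add_mk, Prod.ext_iff]
      refine ⟨by dsimp only; omega, ?_⟩
      dsimp only
      abel


lemma expB_flipB_add (v : Fin (2*n)) :
    expB n (flipB v) + expB n v = (((2:ℕ), (0 : Fin n →₀ ℤ)) : LaurentExp n) := by
  rw [expB_flipB]
  obtain ⟨i, s, hE, _⟩ := expB_eq v
  rw [hE, Prod.mk_add_mk, Prod.ext_iff]
  refine ⟨rfl, ?_⟩
  dsimp only
  rw [neg_add_cancel]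

lemma mem_colon_of_mul_mem {R : Type*} [CommRing R] {N : Ideal R} {u x : R}
    (h : x * u ∈ N) : x ∈ Submodule.colon (N : Submodule R R) (Ideal.span {u}) := by
  refine Submodule.mem_colon.2 fun p hp => ?_
  obtain ⟨a, rfl⟩ := Ideal.mem_span_singleton'.1 hp
  rw [smul_eq_mul, show x * (a * u) = a * (x * u) by ring]
  exact Ideal.mul_mem_left _ _ h

lemma mul_mem_of_mem_colon {R : Type*} [CommRing R] {N : Ideal R} {u x : R}
    (h : x ∈ Submodule.colon (N : Submodule R R) (Ideal.span {u})) : x * u ∈ N := by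
  have h1 := Submodule.mem_colon.1 h u (Ideal.subset_span rfl)
  rwa [smul_eq_mul] at h1


end BnAux

/-- **Example 1.4.**  The toric ring
`K[B_n] = K[t_1 s, …, t_n s, t_1⁻¹ s, …, t_n⁻¹ s]` is strongly Koszul
(with respect to its distinguished degree-one system of generators). -/
theorem Bn_stronglyKoszul (K : Type) [Field K] (n : ℕ) (hn : 1 ≤ n) :
    StronglyKoszulWith (ringBGen K n) := by
  intro r c hc j
  classical
  refine ⟨ringBGen K n '' ((c '' {k : Fin r | k < j}) ∪
      {w | (∃ k : Fin r, k < j) ∧ w = BnAux.flipB (c j)}),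
    Set.image_subset_range _ _, ?_⟩
  have hT : (fun k => ringBGen K n (c k)) '' {k : Fin r | k < j}
      = ringBGen K n '' (c '' {k : Fin r | k < j}) :=
    (Set.image_image _ _ _).symm
  rw [hT]
  apply le_antisymm
  · intro x hx
    have hxu : x * ringBGen K n (c j)
        ∈ Ideal.span (ringBGen K n '' (c '' {k : Fin r | k < j})) :=
      BnAux.mul_mem_of_mem_colon hx
    rw [BnAux.mem_span_gen_iff] at hxu ⊢
    intro m hm
    have hsupp : ((x * ringBGen K n (c j) : ringB K n) : LaurentRing K n)
        = (x : LaurentRing K n) * AddMonoidAlgebra.single (expB n (c j)) (1:K) := rfl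
    have hms : m + expB n (c j)
        ∈ ((x * ringBGen K n (c j) : ringB K n) : LaurentRing K n).coeff.support := by
      rw [hsupp, AddMonoidAlgebra.support_coeff_mul_single _ _ (fun y => by simp) _]
      exact Finset.mem_map.2 ⟨m, hm, rfl⟩
    obtain ⟨v, hv, p, hp, heq⟩ := hxu _ hms
    obtain ⟨k, hk, rfl⟩ := hv
    have hne : c k ≠ c j := fun h => absurd (hc.injective h) (ne_of_lt hk)
    have hmM : m ∈ BnAux.Mset n := BnAux.support_mem_M x.2 m hm
    rcases BnAux.comb hn hne hmM hp heq with ⟨q, hq, rfl⟩ | ⟨q, hq, rfl⟩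
    · exact ⟨c k, Or.inl ⟨k, hk, rfl⟩, q, hq, rfl⟩
    · exact ⟨BnAux.flipB (c j), Or.inr ⟨⟨k, hk⟩, rfl⟩, q, hq, rfl⟩
  · rw [Ideal.span_le]
    rintro x ⟨w, hw, rfl⟩
    rw [SetLike.mem_coe]
    apply BnAux.mem_colon_of_mul_mem
    rcases hw with ⟨k, hk, rfl⟩ | ⟨⟨k0, hk0⟩, rfl⟩
    · exact Ideal.mul_mem_right _ _ (Ideal.subset_span ⟨c k, ⟨k, hk, rfl⟩, rfl⟩)
    · have key : ringBGen K n (BnAux.flipB (c j)) * ringBGen K n (c j)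
          = ringBGen K n (BnAux.flipB (c k0)) * ringBGen K n (c k0) := by
        apply Subtype.ext
        show AddMonoidAlgebra.single _ (1:K) * AddMonoidAlgebra.single _ (1:K)
          = AddMonoidAlgebra.single _ (1:K) * AddMonoidAlgebra.single _ (1:K)
        rw [AddMonoidAlgebra.single_mul_single, AddMonoidAlgebra.single_mul_single, one_mul]
        rw [BnAux.expB_flipB_add, BnAux.expB_flipB_add]
      rw [key]
      exact Ideal.mul_mem_left _ _
        (Ideal.subset_span ⟨c k0, ⟨k0, hk0, rfl⟩, rfl⟩)

end
end

section
/- Let K be a field and let I_A ⊆ K[x_1,...,x_5] be the toric ideal of the fourth Veronese subring K[A] = K[t_1^4, t_1^3 t_2, t_1^2 t_2^2, t_1 t_2^3, t_2^4] of K[t_1,t_2] (where x_i ↦ t_1^{5−i} t_2^{i−1}). For every ordering x_{i_1} < x_{i_2} < x_{i_3} < x_{i_4} < x_{i_5} of the variables with {i_1, i_2} = {2, 4}, either x_2^3 or x_4^3 belongs to G(in_{<_rlex}(I_A)) ∩ (x_{i_2}), where <_rlex is the induced reverse lexicographic order. In particular, some monomial in G(in_{<_rlex}(I_A)) divisible by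 x_{i_2} is not quadratic, so I_A fails the hypothesis of the Gröbner-basis sufficient condition for strong Koszulness for the pair (2,4), even though K[A] is strongly Koszul. -/
/-!
Common definitions: toric ideals/rings of monomial families, strong Koszulness
with respect to a system of algebra generators, initial ideals with respect to
a relation on exponent vectors, (reduced) Gröbner bases, the (graded) reverse
lexicographic order induced by an ordering of the variables, minimal monomial
generators, and compressedness.
-/

open MvPolynomial

open MvPolynomial

noncomputable section

/-- The exponent vectors of the monomials of the fourth Veronese subring of
`K[t_1, t_2]`: `u_i = t_1^{5-i} t_2^{i-1}` (0-indexed: `a i = t_1^{4-i} t_2^i`). -/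
def veroExp (i : Fin 5) : Fin 2 →₀ ℕ :=
  Finsupp.single 0 (4 - (i : ℕ)) + Finsupp.single 1 (i : ℕ)

section Helpers
variable {K : Type} [Field K]

lemma fin2_ext {d e : Fin 2 →₀ ℕ} (h0 : d 0 = e 0) (h1 : d 1 = e 1) : d = e := by
  ext c; fin_cases c <;> assumption

lemma expDeg_fin2 (d : Fin 2 →₀ ℕ) : expDeg d = d 0 + d 1 := by
  rw [expDeg, Finsupp.sum_fintype _ _ (fun _ => rfl), Fin.sum_univ_two]

lemma expDeg_fin5 (d : Fin 5 →₀ ℕ) : expDeg d = d 0 + d 1 + d 2 + d 3 + d 4 := by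
  rw [expDeg, Finsupp.sum_fintype _ _ (fun _ => rfl), Fin.sum_univ_five]

@[simp] lemma veroExp_apply0 (i : Fin 5) : veroExp i 0 = 4 - (i : ℕ) := by
  simp [veroExp]

@[simp] lemma veroExp_apply1 (i : Fin 5) : veroExp i 1 = (i : ℕ) := by
  simp [veroExp]

end Helpers
section Helpers2
variable {K : Type} [Field K]

lemma expDeg_add {n : ℕ} (a b : Fin n →₀ ℕ) : expDeg (a + b) = expDeg a + expDeg b :=
  Finsupp.sum_add_index' (fun _ => rfl) (fun _ _ _ => rfl)

lemma expDeg_veroExp (i : Fin 5) : expDeg (veroExp i) = 4 := by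
  have := i.isLt
  rw [expDeg_fin2, veroExp_apply0, veroExp_apply1]; omega

lemma exists_decomp (d : Fin 2 →₀ ℕ) (s m : ℕ) (hdeg : expDeg d = 4*(s+1)) (hm : m ≤ 4)
    (hd0 : m ≤ d 0) :
    ∃ (k : Fin 5) (d' : Fin 2 →₀ ℕ), (k:ℕ) ≤ 4 - m ∧ expDeg d' = 4*s ∧ d = veroExp k + d' := by
  rw [expDeg_fin2] at hdeg
  by_cases h4 : 4 ≤ d 0
  · refine ⟨⟨0, by norm_num⟩, Finsupp.single 0 (d 0 - 4) + Finsupp.single 1 (d 1),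
      by simp, ?_, ?_⟩
    · rw [expDeg_fin2]; simp [Finsupp.single_apply]; omega
    · apply fin2_ext <;> simp [Finsupp.single_apply, Finsupp.add_apply] <;> omega
  · refine ⟨⟨4 - d 0, by omega⟩, Finsupp.single 1 (d 1 - (4 - d 0)), by simp; omega, ?_, ?_⟩
    · rw [expDeg_fin2]; simp [Finsupp.single_apply]; omega
    · apply fin2_ext <;> simp [Finsupp.single_apply, Finsupp.add_apply] <;> omega

lemma monomial_mem_toricRing (d : Fin 2 →₀ ℕ) (c : K) (h : 4 ∣ expDeg d) :
    (monomial d c : MvPolynomial (Fin 2) K) ∈ toricRing K veroExp := by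
  obtain ⟨s, hs⟩ := h
  induction s generalizing d with
  | zero =>
    have hd : d = 0 := by
      have h2 := expDeg_fin2 d
      apply fin2_ext <;> simp <;> omega
    subst hd
    rw [monomial_zero']
    exact (toricRing K veroExp).algebraMap_mem c
  | succ s ih =>
    obtain ⟨k, d', _, hdeg', rfl⟩ := exists_decomp d s 0 hs (by norm_num) (Nat.zero_le _)
    rw [← one_mul c, ← monomial_mul]
    exact mul_mem (Algebra.subset_adjoin ⟨k, rfl⟩) (ih d' hdeg')

def degDvdSubalg (K : Type) [Field K] : Subalgebra K (MvPolynomial (Fin 2) K) where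
  carrier := {p | ∀ d ∈ p.support, 4 ∣ expDeg d}
  mul_mem' := by
    classical
    intro p q hp hq d hd
    obtain ⟨a, ha, b, hb, rfl⟩ := Finset.mem_add.mp (MvPolynomial.support_mul p q hd)
    rw [expDeg_add]
    exact Dvd.dvd.add (hp a ha) (hq b hb)
  one_mem' := by
    intro d hd
    rw [MvPolynomial.mem_support_iff, MvPolynomial.coeff_one] at hd
    by_cases h : d = 0
    · subst h; exact ⟨0, rfl⟩
    · simp [h] at hd; exact absurd hd.symm h
  add_mem' := by
    classical
    intro p q hp hq d hd
    rcases Finset.mem_union.mp (Finsupp.support_add hd) with h | h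
    exacts [hp d h, hq d h]
  zero_mem' := by simp
  algebraMap_mem' := by
    intro c d hd
    rw [MvPolynomial.algebraMap_eq, MvPolynomial.mem_support_iff, MvPolynomial.coeff_C] at hd
    by_cases h : d = 0
    · subst h; exact ⟨0, rfl⟩
    · simp [h] at hd; exact absurd hd.1.symm h

end Helpers2
section Helpers3
variable {K : Type} [Field K]

lemma mem_toricRing_iff {p : MvPolynomial (Fin 2) K} :
    p ∈ toricRing K veroExp ↔ ∀ d ∈ p.support, 4 ∣ expDeg d := by
  classical
  constructor
  · intro hp
    have hle : toricRing K veroExp ≤ degDvdSubalg K := by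
      rw [toricRing, Algebra.adjoin_le_iff]
      rintro _ ⟨i, rfl⟩ d hd
      rw [MvPolynomial.support_monomial, if_neg (one_ne_zero)] at hd
      rw [Finset.mem_singleton] at hd
      subst hd
      rw [expDeg_veroExp]
    exact hle hp
  · intro h
    rw [MvPolynomial.as_sum p]
    exact sum_mem fun d hd => monomial_mem_toricRing d _ (h d hd)

@[simp] lemma toricGen_coe (i : Fin 5) :
    ((toricGen K veroExp i : toricRing K veroExp) : MvPolynomial (Fin 2) K)
      = monomial (veroExp i) 1 := rfl

lemma mem_span_val {S : Set (toricRing K veroExp)} {x : toricRing K veroExp}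
    (hx : x ∈ Ideal.span S) :
    (x : MvPolynomial (Fin 2) K) ∈ Ideal.span (Subtype.val '' S) := by
  have hle : Ideal.span S ≤ Ideal.comap
      ((toricRing K veroExp).val.toRingHom) (Ideal.span (Subtype.val '' S)) := by
    rw [Ideal.span_le]
    intro s hs
    exact Ideal.subset_span ⟨s, hs, rfl⟩
  exact hle hx

lemma mem_span_gens (m : ℕ) (hm1 : 1 ≤ m) (hm4 : m ≤ 4) (x : MvPolynomial (Fin 2) K) :
    ∀ (hx : x ∈ toricRing K veroExp), (∀ d ∈ x.support, m ≤ d 0) →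
    (⟨x, hx⟩ : toricRing K veroExp) ∈
      Ideal.span (toricGen K veroExp '' {k : Fin 5 | (k:ℕ) ≤ 4 - m}) := by
  induction x using MvPolynomial.monomial_add_induction_on with
  | C a =>
    intro hx hd0
    by_cases ha : a = 0
    · subst ha
      have : (⟨C 0, hx⟩ : toricRing K veroExp) = 0 := by
        apply Subtype.ext; simp
      rw [this]; exact Ideal.zero_mem _
    · exfalso
      have h0 : (0 : Fin 2 →₀ ℕ) ∈ (C (σ := Fin 2) a).support := by
        rw [MvPolynomial.mem_support_iff, MvPolynomial.coeff_C]
        simpa using ha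
      have := hd0 0 h0
      simp at this
      omega
  | monomial_add a b f ha hb ih =>
    intro hx hd0
    classical
    have hsupp : ∀ d, d ∈ (monomial a b + (show MvPolynomial (Fin 2) K from f)).support ↔ d = a ∨ d ∈ f.support := by
      intro d
      rw [MvPolynomial.mem_support_iff, MvPolynomial.coeff_add, MvPolynomial.coeff_monomial]
      by_cases hda : d = a
      · subst hda
        simp [hb, show MvPolynomial.coeff d f = 0 from Finsupp.notMem_support_iff.mp ha]
      · simp only [if_neg (show ¬ a = d from fun h => hda h.symm), zero_add, hda, false_or]
        exact Finsupp.mem_support_iff.symm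
    have hasup := (hsupp a).mpr (Or.inl rfl)
    have hmemM : (monomial a b : MvPolynomial (Fin 2) K) ∈ toricRing K veroExp :=
      monomial_mem_toricRing a b (mem_toricRing_iff.mp hx a hasup)
    have hmemF : f ∈ toricRing K veroExp := by
      rw [mem_toricRing_iff]
      intro d hd
      exact mem_toricRing_iff.mp hx d ((hsupp d).mpr (Or.inr hd))
    have h4 : 4 ∣ expDeg a := mem_toricRing_iff.mp hmemM a
      (by rw [MvPolynomial.support_monomial, if_neg hb]; exact Finset.mem_singleton_self a)
    have hma : m ≤ a 0 := hd0 a hasup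
    obtain ⟨s, hs⟩ := h4
    have hs' : expDeg a = 4 * ((s - 1) + 1) := by
      have : a 0 ≤ expDeg a := by rw [expDeg_fin2]; omega
      omega
    obtain ⟨k, d', hk, hdeg', hadd⟩ := exists_decomp a (s-1) m hs' hm4 hma
    have hd'mem : (monomial d' b : MvPolynomial (Fin 2) K) ∈ toricRing K veroExp :=
      monomial_mem_toricRing d' b ⟨s - 1, hdeg'⟩
    have hprod : (⟨monomial a b, hmemM⟩ : toricRing K veroExp)
        = ⟨monomial d' b, hd'mem⟩ * toricGen K veroExp k := by
      apply Subtype.ext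
      show (monomial a b : MvPolynomial (Fin 2) K) = monomial d' b * monomial (veroExp k) 1
      rw [monomial_mul, mul_one, hadd, add_comm]
    have hM : (⟨monomial a b, hmemM⟩ : toricRing K veroExp) ∈
        Ideal.span (toricGen K veroExp '' {k : Fin 5 | (k:ℕ) ≤ 4 - m}) := by
      rw [hprod]
      exact Ideal.mul_mem_left _ _ (Ideal.subset_span ⟨k, hk, rfl⟩)
    exact Ideal.add_mem _ hM (ih hmemF fun d hd => hd0 d ((hsupp d).mpr (Or.inr hd)))

end Helpers3
section Helpers4
variable {K : Type} [Field K]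

lemma toricGen_mul_eq (k j i k' : Fin 5) (h : (k:ℕ) + (j:ℕ) = (i:ℕ) + (k':ℕ)) :
    toricGen K veroExp k * toricGen K veroExp j
      = toricGen K veroExp i * toricGen K veroExp k' := by
  apply Subtype.ext
  show (monomial (veroExp k) 1 * monomial (veroExp j) 1 : MvPolynomial (Fin 2) K)
      = monomial (veroExp i) 1 * monomial (veroExp k') 1
  have hk := k.isLt; have hj := j.isLt; have hi := i.isLt; have hk' := k'.isLt
  have he : veroExp k + veroExp j = veroExp i + veroExp k' := by
    apply fin2_ext <;> simp [Finsupp.add_apply] <;> omega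
  rw [monomial_mul, monomial_mul, he]

set_option maxHeartbeats 1000000 in
set_option synthInstance.maxHeartbeats 400000 in
lemma colon_eq (i j : Fin 5) (hij : i < j) (T : Set (Fin 5)) (hiT : i ∈ T)
    (hT : ∀ k ∈ T, k ≤ i) :
    Submodule.colon (Ideal.span (toricGen K veroExp '' T))
        (Ideal.span {toricGen K veroExp j})
      = Ideal.span (toricGen K veroExp '' {k : Fin 5 | (k:ℕ) ≤ 4 - ((j:ℕ) - (i:ℕ))}) := by
  have hi4 := i.isLt
  have hj4 := j.isLt
  have hijn : (i:ℕ) < (j:ℕ) := hij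
  set m : ℕ := (j:ℕ) - (i:ℕ) with hm
  apply le_antisymm
  · intro x hx
    have hxu : x * toricGen K veroExp j ∈ Ideal.span (toricGen K veroExp '' T) := by
      have := Submodule.mem_colon.mp hx (toricGen K veroExp j)
        (Ideal.subset_span rfl)
      rwa [smul_eq_mul] at this
    have hval : (x : MvPolynomial (Fin 2) K) * monomial (veroExp j) 1
        ∈ Ideal.span ((fun e => monomial e (1:K)) '' (veroExp '' T)) := by
      have h1 := mem_span_val hxu
      have h2 : Subtype.val '' (toricGen K veroExp '' T)
          = (fun e => monomial e (1:K)) '' (veroExp '' T) := by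
        rw [Set.image_image, Set.image_image]
        rfl
      rw [h2] at h1
      exact h1
    have hkey : ∀ d ∈ (x : MvPolynomial (Fin 2) K).support, m ≤ d 0 := by
      intro d hd
      have hds : d + veroExp j ∈ ((x : MvPolynomial (Fin 2) K)
          * monomial (veroExp j) 1).support := by
        rw [MvPolynomial.mem_support_iff, MvPolynomial.coeff_mul_monomial, mul_one]
        exact MvPolynomial.mem_support_iff.mp hd
      obtain ⟨_, ⟨k, hkT, rfl⟩, hle⟩ :=
        MvPolynomial.mem_ideal_span_monomial_image.mp hval _ hds
      have hle0 : veroExp k 0 ≤ (d + veroExp j) 0 := hle 0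
      have hki : (k:ℕ) ≤ (i:ℕ) := hT k hkT
      have hk4 := k.isLt
      rw [veroExp_apply0, Finsupp.add_apply, veroExp_apply0] at hle0
      omega
    have := mem_span_gens (K := K) m (by omega) (by omega) (x : MvPolynomial (Fin 2) K)
      x.2 hkey
    have hxx : (⟨(x : MvPolynomial (Fin 2) K), x.2⟩ : toricRing K veroExp) = x :=
      Subtype.ext rfl
    rwa [hxx] at this
  · rw [Ideal.span_le]
    rintro _ ⟨k, hk, rfl⟩
    rw [SetLike.mem_coe, Submodule.mem_colon]
    intro p hp
    obtain ⟨y, rfl⟩ := Ideal.mem_span_singleton'.mp hp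
    have hk4 := k.isLt
    have hkm : (k:ℕ) ≤ 4 - m := hk
    have hmul : toricGen K veroExp k * toricGen K veroExp j
        = toricGen K veroExp i * toricGen K veroExp ⟨(k:ℕ) + m, by omega⟩ :=
      toricGen_mul_eq _ _ _ _ (by simp; omega)
    rw [smul_eq_mul]
    have heq2 : toricGen K veroExp k * (y * toricGen K veroExp j)
        = (y * toricGen K veroExp ⟨(k:ℕ) + m, by omega⟩) * toricGen K veroExp i := by
      calc toricGen K veroExp k * (y * toricGen K veroExp j)
          = y * (toricGen K veroExp k * toricGen K veroExp j) := by ring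
        _ = y * (toricGen K veroExp i * toricGen K veroExp ⟨(k:ℕ) + m, by omega⟩) := by
            rw [hmul]
        _ = (y * toricGen K veroExp ⟨(k:ℕ) + m, by omega⟩) * toricGen K veroExp i := by ring
    rw [heq2]
    exact Ideal.mul_mem_left _ _ (Ideal.subset_span ⟨i, hiT, rfl⟩)

end Helpers4
section Helpers5
variable {K : Type} [Field K]

lemma toricGen_ne_zero (i : Fin 5) : toricGen K veroExp i ≠ 0 := by
  intro h
  have : (monomial (veroExp i) (1:K) : MvPolynomial (Fin 2) K) = 0 :=
    congrArg Subtype.val h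
  rw [MvPolynomial.monomial_eq_zero] at this
  exact one_ne_zero this

set_option maxHeartbeats 1000000 in
set_option synthInstance.maxHeartbeats 400000 in
lemma veronese_stronglyKoszul : ToricStronglyKoszul K veroExp := by
  intro r c hc j
  by_cases hj : (j : ℕ) = 0
  · refine ⟨∅, by simp, ?_⟩
    have hempty : {k : Fin r | k < j} = ∅ := by
      ext k
      simp only [Set.mem_setOf_eq, Set.mem_empty_iff_false, iff_false, not_lt]
      rw [Fin.le_def]
      omega
    rw [hempty, Set.image_empty, Ideal.span_empty]
    apply le_antisymm
    · intro x hx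
      have hmem := Submodule.mem_colon.mp hx (toricGen K veroExp (c j))
        (Ideal.subset_span rfl)
      rw [smul_eq_mul, Ideal.mem_bot] at hmem
      have hv : (x : MvPolynomial (Fin 2) K) * monomial (veroExp (c j)) 1 = 0 :=
        congrArg Subtype.val hmem
      rcases mul_eq_zero.mp hv with h | h
      · exact Ideal.mem_bot.mpr (Subtype.ext h)
      · rw [MvPolynomial.monomial_eq_zero] at h
        exact absurd h one_ne_zero
    · exact bot_le
  · set jp : Fin r := ⟨(j:ℕ) - 1, by omega⟩ with hjp
    have hjpj : jp < j := by rw [Fin.lt_def]; simp [hjp]; omega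
    set i : Fin 5 := c jp with hi
    have hij : i < c j := hc hjpj
    refine ⟨toricGen K veroExp '' {k : Fin 5 | (k:ℕ) ≤ 4 - (((c j):ℕ) - (i:ℕ))},
      Set.image_subset_range _ _, ?_⟩
    have hset : (fun k => toricGen K veroExp (c k)) '' {k : Fin r | k < j}
        = toricGen K veroExp '' (c '' {k : Fin r | k < j}) := by
      rw [Set.image_image]
    rw [hset]
    apply colon_eq i (c j) hij
    · exact ⟨jp, hjpj, rfl⟩
    · rintro _ ⟨k', hk', rfl⟩
      have hk2 : k' < j := hk'
      refine hc.monotone ?_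
      rw [Fin.le_def]
      rw [Fin.lt_def] at hk2
      simp only [hjp]
      omega

end Helpers5
section Helpers6
variable {K : Type} [Field K]

/-- exponent map induced by `π`. -/
def phiMap (e : Fin 5 →₀ ℕ) : Fin 2 →₀ ℕ := e.sum fun i k => k • veroExp i

lemma phiMap_zero : phiMap 0 = 0 := Finsupp.sum_zero_index

lemma phiMap_single_add (a : Fin 5) (b : ℕ) (f : Fin 5 →₀ ℕ) :
    phiMap (Finsupp.single a b + f) = b • veroExp a + phiMap f := by
  rw [phiMap, Finsupp.sum_add_index' (fun i => zero_smul ℕ (veroExp i))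
    (fun i x y => add_smul x y (veroExp i)), Finsupp.sum_single_index (zero_smul ℕ (veroExp a))]
  rfl

lemma phiMap_apply (e : Fin 5 →₀ ℕ) (c : Fin 2) :
    phiMap e c = ∑ i : Fin 5, e i * veroExp i c := by
  rw [phiMap, Finsupp.sum, Finsupp.finset_sum_apply]
  rw [Finset.sum_subset (Finset.subset_univ e.support)]
  · apply Finset.sum_congr rfl
    intro i _
    rw [Finsupp.smul_apply, smul_eq_mul]
  · intro i _ hi
    rw [Finsupp.notMem_support_iff.mp hi, zero_smul]
    rfl

lemma pi_monomial (e : Fin 5 →₀ ℕ) (c : K) :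
    MvPolynomial.aeval (fun i => (monomial (veroExp i) (1:K) : MvPolynomial (Fin 2) K))
      (monomial e c) = monomial (phiMap e) c := by
  induction e using Finsupp.induction generalizing c with
  | zero => rw [phiMap_zero, monomial_zero', monomial_zero', aeval_C]; rfl
  | single_add a b f ha hb ih =>
    rw [show (Finsupp.single a b + f : Fin 5 →₀ ℕ) = Finsupp.single a b + f from rfl]
    rw [← one_mul c, ← monomial_mul, map_mul, ih, ← X_pow_eq_monomial, map_pow, aeval_X,
      monomial_pow, one_pow, monomial_mul, one_mul, phiMap_single_add]

lemma mem_toricIdeal_iff (f : MvPolynomial (Fin 5) K) :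
    f ∈ toricIdeal K veroExp ↔
      MvPolynomial.aeval
        (fun i => (monomial (veroExp i) (1:K) : MvPolynomial (Fin 2) K)) f = 0 :=
  Iff.rfl

lemma binom_mem_toricIdeal (e1 e2 : Fin 5 →₀ ℕ) (h : phiMap e1 = phiMap e2) :
    (monomial e1 (1:K) - monomial e2 1) ∈ toricIdeal K veroExp := by
  rw [mem_toricIdeal_iff, map_sub, pi_monomial, pi_monomial, h, sub_self]

lemma coeff_pi (f : MvPolynomial (Fin 5) K) (w : Fin 2 →₀ ℕ) :
    coeff w (MvPolynomial.aeval
        (fun i => (monomial (veroExp i) (1:K) : MvPolynomial (Fin 2) K)) f)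
      = ∑ e ∈ f.support, (if phiMap e = w then coeff e f else 0) := by
  classical
  conv_lhs => rw [MvPolynomial.as_sum f]
  rw [map_sum, MvPolynomial.coeff_sum]
  apply Finset.sum_congr rfl
  intro e _
  rw [pi_monomial, MvPolynomial.coeff_monomial]

lemma support_binom (a b : Fin 5 →₀ ℕ) (hab : a ≠ b) :
    (monomial a (1:K) - monomial b 1).support = {a, b} := by
  classical
  ext d
  rw [MvPolynomial.mem_support_iff, MvPolynomial.coeff_sub, MvPolynomial.coeff_monomial,
    MvPolynomial.coeff_monomial, Finset.mem_insert, Finset.mem_singleton]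
  by_cases hda : a = d
  · subst hda
    rw [if_pos rfl, if_neg (fun h => hab h.symm)]
    simp
  · rw [if_neg hda]
    by_cases hdb : b = d
    · subst hdb
      rw [if_pos rfl]
      simp [Ne.symm hda]
    · rw [if_neg hdb]
      simp [Ne.symm hda, Ne.symm hdb]

lemma fin5_ext {d e : Fin 5 →₀ ℕ} (h0 : d 0 = e 0) (h1 : d 1 = e 1) (h2 : d 2 = e 2)
    (h3 : d 3 = e 3) (h4 : d 4 = e 4) : d = e := by
  ext c; fin_cases c <;> assumption

end Helpers6
section Helpers7
variable {K : Type} [Field K]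

lemma enum_aux1 (a b c d e k : ℕ)
    (h0 : a * 4 + b * 3 + c * 2 + d * 1 + e * 0 = k * 3)
    (h1 : a * 0 + b * 1 + c * 2 + d * 3 + e * 4 = k)
    (hk : k ≤ 2) :
    (a = 0 ∧ b = k ∧ c = 0 ∧ d = 0 ∧ e = 0)
      ∨ (a = 1 ∧ b = 0 ∧ c = 1 ∧ d = 0 ∧ e = 0 ∧ k = 2) := by
  have ha : a ≤ 1 := by omega
  have hc : c ≤ 1 := by omega
  interval_cases a <;> interval_cases c <;> omega

lemma enum_aux3 (a b c d e k : ℕ)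
    (h0 : a * 4 + b * 3 + c * 2 + d * 1 + e * 0 = k * 1)
    (h1 : a * 0 + b * 1 + c * 2 + d * 3 + e * 4 = k * 3)
    (hk : k ≤ 2) :
    (a = 0 ∧ b = 0 ∧ c = 0 ∧ d = k ∧ e = 0)
      ∨ (a = 0 ∧ b = 0 ∧ c = 1 ∧ d = 0 ∧ e = 1 ∧ k = 2) := by
  have hc : c ≤ 1 := by omega
  have he : e ≤ 1 := by omega
  interval_cases c <;> interval_cases e <;> omega

lemma no_small_initial (ord : Fin 5 ≃ Fin 5)
    (hord : (ord 0 = 1 ∧ ord 1 = 3) ∨ (ord 0 = 3 ∧ ord 1 = 1))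
    (i : Fin 5) (hi : i = 1 ∨ i = 3)
    (f : MvPolynomial (Fin 5) K) (hf : f ∈ toricIdeal K veroExp)
    (s : Fin 5 →₀ ℕ) (hinit : IsInitialExp (rlexLT ord) f s)
    (hs : ∀ c, s c ≤ Finsupp.single i 2 c) : False := by
  classical
  have hs0 : ∀ c, c ≠ i → s c = 0 := by
    intro c hc
    have := hs c
    rwa [Finsupp.single_apply, if_neg (fun h => hc h.symm), Nat.le_zero] at this
  have hsi : s i ≤ 2 := by
    have := hs i
    rwa [Finsupp.single_apply, if_pos rfl] at this
  have hw : coeff (phiMap s) (MvPolynomial.aeval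
      (fun i => (monomial (veroExp i) (1:K) : MvPolynomial (Fin 2) K)) f) = 0 := by
    rw [(mem_toricIdeal_iff f).mp hf, MvPolynomial.coeff_zero]
  rw [coeff_pi, Finset.sum_eq_single_of_mem s hinit.1 ?side, if_pos rfl] at hw
  · exact MvPolynomial.mem_support_iff.mp hinit.1 hw
  case side =>
    intro e he hne
    by_cases hphi : phiMap e = phiMap s
    case neg => rw [if_neg hphi]
    exfalso
    have h0 : e 0 * 4 + e 1 * 3 + e 2 * 2 + e 3 * 1 + e 4 * 0
        = s 0 * 4 + s 1 * 3 + s 2 * 2 + s 3 * 1 + s 4 * 0 := by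
      have := congrArg (fun t : Fin 2 →₀ ℕ => t 0) hphi
      simpa [phiMap_apply, Fin.sum_univ_five, show ((3:Fin 5):ℕ) = 3 from rfl,
        show ((4:Fin 5):ℕ) = 4 from rfl] using this
    have h1 : e 0 * 0 + e 1 * 1 + e 2 * 2 + e 3 * 3 + e 4 * 4
        = s 0 * 0 + s 1 * 1 + s 2 * 2 + s 3 * 3 + s 4 * 4 := by
      have := congrArg (fun t : Fin 2 →₀ ℕ => t 1) hphi
      simpa [phiMap_apply, Fin.sum_univ_five, show ((3:Fin 5):ℕ) = 3 from rfl,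
        show ((4:Fin 5):ℕ) = 4 from rfl] using this
    have hrlex := hinit.2 e he hne
    have hdegcon : ¬ expDeg e < expDeg s := by
      rw [expDeg_fin5, expDeg_fin5]
      omega
    rcases hrlex with hlt | ⟨hdeg, p, hp, hq⟩
    · exact hdegcon hlt
    clear hdegcon
    have hcases : p = 0 ∨ p = 1 ∨ (0 < p ∧ 1 < p) := by
      by_cases hc0 : p = 0
      · exact Or.inl hc0
      by_cases hc1 : p = 1
      · exact Or.inr (Or.inl hc1)
      refine Or.inr (Or.inr ⟨?_, ?_⟩)
      · rw [Fin.lt_def]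
        have : p.val ≠ 0 := fun h => hc0 (Fin.ext h)
        omega
      · rw [Fin.lt_def]
        have h5 := p.isLt
        have : p.val ≠ 0 := fun h => hc0 (Fin.ext h)
        have : p.val ≠ 1 := fun h => hc1 (Fin.ext h)
        simp only [Fin.val_one]
        omega
    rcases hi with rfl | rfl
    -- i = 1 case
    · have hz0 : s 0 = 0 := hs0 0 (by decide)
      have hz2 : s 2 = 0 := hs0 2 (by decide)
      have hz3 : s 3 = 0 := hs0 3 (by decide)
      have hz4 : s 4 = 0 := hs0 4 (by decide)
      have henum := enum_aux1 (e 0) (e 1) (e 2) (e 3) (e 4) (s 1)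
        (by omega) (by omega) hsi
      rcases henum with ⟨q0, q1, q2, q3, q4⟩ | ⟨q0, q1, q2, q3, q4, q5⟩
      · exact hne (fin5_ext (by omega) (by omega) (by omega) (by omega) (by omega))
      rcases hord with ⟨ho0, ho1⟩ | ⟨ho0, ho1⟩ <;>
        rcases hcases with rfl | rfl | ⟨hcc, hcc'⟩ <;>
        first
          | (rw [ho0] at hp; omega)
          | (rw [ho1] at hp; omega)
          | (have h1' := hq 0 hcc
             have h2' := hq 1 hcc'
             rw [ho0] at h1'
             rw [ho1] at h2'
             omega)
    -- i = 3 case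
    · have hz0 : s 0 = 0 := hs0 0 (by decide)
      have hz1 : s 1 = 0 := hs0 1 (by decide)
      have hz2 : s 2 = 0 := hs0 2 (by decide)
      have hz4 : s 4 = 0 := hs0 4 (by decide)
      have henum := enum_aux3 (e 0) (e 1) (e 2) (e 3) (e 4) (s 3)
        (by omega) (by omega) hsi
      rcases henum with ⟨q0, q1, q2, q3, q4⟩ | ⟨q0, q1, q2, q3, q4, q5⟩
      · exact hne (fin5_ext (by omega) (by omega) (by omega) (by omega) (by omega))
      rcases hord with ⟨ho0, ho1⟩ | ⟨ho0, ho1⟩ <;>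
        rcases hcases with rfl | rfl | ⟨hcc, hcc'⟩ <;>
        first
          | (rw [ho0] at hp; omega)
          | (rw [ho1] at hp; omega)
          | (have h1' := hq 0 hcc
             have h2' := hq 1 hcc'
             rw [ho0] at h1'
             rw [ho1] at h2'
             omega)

end Helpers7
section Helpers8
variable {K : Type} [Field K]

lemma initialIdeal_eq_image (lt : (Fin 5 →₀ ℕ) → (Fin 5 →₀ ℕ) → Prop)
    (I : Ideal (MvPolynomial (Fin 5) K)) :
    initialIdeal lt I = Ideal.span ((fun s => monomial s (1:K)) ''
      {dd | ∃ f ∈ I, IsInitialExp lt f dd}) := by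
  unfold initialIdeal
  congr 1
  ext m
  constructor
  · rintro ⟨f, hf, dd, hdd, rfl⟩
    exact ⟨dd, ⟨f, hf, hdd⟩, rfl⟩
  · rintro ⟨dd, ⟨f, hf, hdd⟩, rfl⟩
    exact ⟨f, hf, dd, hdd, rfl⟩

lemma fin5_not_lt_zero (q : Fin 5) : ¬ q < 0 := by
  rw [Fin.lt_def]
  simp

lemma single_expDeg3 (i : Fin 5) : expDeg (Finsupp.single i 3) = 3 := by
  rw [expDeg]
  exact Finsupp.sum_single_index rfl

lemma isMinGen_13 (ord : Fin 5 ≃ Fin 5) (ho0 : ord 0 = 1) (ho1 : ord 1 = 3) :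
    IsMinGen (initialIdeal (rlexLT ord) (toricIdeal K veroExp)) (Finsupp.single 3 3) := by
  classical
  set dd : Fin 5 →₀ ℕ := Finsupp.single 3 3 with hdd
  set bb : Fin 5 →₀ ℕ := Finsupp.single 1 1 + Finsupp.single 4 2 with hbb
  have hbbv : ∀ c : Fin 5, bb c = if c = 1 then 1 else if c = 4 then 2 else 0 := by
    intro c
    fin_cases c <;> simp [hbb, Finsupp.single_apply]
  have hddv : ∀ c : Fin 5, dd c = if c = 3 then 3 else 0 := by
    intro c
    fin_cases c <;> simp [hdd, Finsupp.single_apply]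
  have hne : bb ≠ dd := by
    intro h
    have h2 : bb 1 = dd 1 := DFunLike.congr_fun h 1
    rw [hbbv 1, hddv 1] at h2
    simp at h2
  have hphi : phiMap dd = phiMap bb := by
    apply fin2_ext <;>
      (rw [phiMap_apply, phiMap_apply, Fin.sum_univ_five, Fin.sum_univ_five]
       simp only [hbbv, hddv, veroExp_apply0, veroExp_apply1]
       decide)
  have hsupp := support_binom (K := K) dd bb hne.symm
  have hinit : IsInitialExp (rlexLT ord)
      (monomial dd (1:K) - monomial bb 1) dd := by
    constructor
    · rw [hsupp]; exact Finset.mem_insert_self _ _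
    · intro e he hene
      rw [hsupp, Finset.mem_insert, Finset.mem_singleton] at he
      rcases he with rfl | rfl
      · exact absurd rfl hene
      · right
        constructor
        · rw [expDeg_fin5, expDeg_fin5]
          simp only [hbbv, hddv]
          decide
        · refine ⟨0, ?_, fun q hq => absurd hq (fin5_not_lt_zero q)⟩
          rw [ho0, hbbv 1, hddv 1]
          decide
  constructor
  · exact Ideal.subset_span ⟨monomial dd 1 - monomial bb 1,
      binom_mem_toricIdeal dd bb hphi, dd, hinit, rfl⟩
  · intro d' hled' hne' hmem
    have hd'c : ∀ c, d' c ≤ dd c := Finsupp.le_def.mp hled'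
    have hd3 : d' 3 ≤ 2 := by
      by_cases h3 : d' 3 = 3
      · exfalso
        apply hne'
        have h0' := hd'c 0
        have h1' := hd'c 1
        have h2' := hd'c 2
        have h4' := hd'c 4
        simp only [hddv] at h0' h1' h2' h4'
        simp at h0' h1' h2' h4'
        apply fin5_ext <;> simp only [hddv] <;> simp [h0', h1', h2', h4', h3]
      · have h3' := hd'c 3
        rw [hddv 3] at h3'
        simp at h3'
        omega
    rw [initialIdeal_eq_image] at hmem
    have hsuppm : d' ∈ (monomial d' (1:K)).support := by
      rw [MvPolynomial.support_monomial, if_neg (one_ne_zero)]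
      exact Finset.mem_singleton_self _
    obtain ⟨sdd, ⟨f, hf, hinit'⟩, hle⟩ :=
      MvPolynomial.mem_ideal_span_monomial_image.mp hmem d' hsuppm
    refine no_small_initial ord (Or.inl ⟨ho0, ho1⟩) 3 (Or.inr rfl) f hf sdd hinit' ?_
    intro c
    have h1 := Finsupp.le_def.mp hle c
    have h2 := hd'c c
    rw [hddv c] at h2
    rw [Finsupp.single_apply]
    by_cases hc : c = 3
    · subst hc
      norm_num at h2 ⊢
      omega
    · rw [if_neg (fun h => hc h.symm)]
      rw [if_neg hc] at h2
      omega
lemma isMinGen_31 (ord : Fin 5 ≃ Fin 5) (ho0 : ord 0 = 3) (ho1 : ord 1 = 1) :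
    IsMinGen (initialIdeal (rlexLT ord) (toricIdeal K veroExp)) (Finsupp.single 1 3) := by
  classical
  set dd : Fin 5 →₀ ℕ := Finsupp.single 1 3 with hdd
  set bb : Fin 5 →₀ ℕ := Finsupp.single 0 2 + Finsupp.single 3 1 with hbb
  have hbbv : ∀ c : Fin 5, bb c = if c = 0 then 2 else if c = 3 then 1 else 0 := by
    intro c
    fin_cases c <;> simp [hbb, Finsupp.single_apply]
  have hddv : ∀ c : Fin 5, dd c = if c = 1 then 3 else 0 := by
    intro c
    fin_cases c <;> simp [hdd, Finsupp.single_apply]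
  have hne : bb ≠ dd := by
    intro h
    have h2 : bb 0 = dd 0 := DFunLike.congr_fun h 0
    rw [hbbv 0, hddv 0] at h2
    simp at h2
  have hphi : phiMap dd = phiMap bb := by
    apply fin2_ext <;>
      (rw [phiMap_apply, phiMap_apply, Fin.sum_univ_five, Fin.sum_univ_five]
       simp only [hbbv, hddv, veroExp_apply0, veroExp_apply1]
       decide)
  have hsupp := support_binom (K := K) dd bb hne.symm
  have hinit : IsInitialExp (rlexLT ord)
      (monomial dd (1:K) - monomial bb 1) dd := by
    constructor
    · rw [hsupp]; exact Finset.mem_insert_self _ _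
    · intro e he hene
      rw [hsupp, Finset.mem_insert, Finset.mem_singleton] at he
      rcases he with rfl | rfl
      · exact absurd rfl hene
      · right
        constructor
        · rw [expDeg_fin5, expDeg_fin5]
          simp only [hbbv, hddv]
          decide
        · refine ⟨0, ?_, fun q hq => absurd hq (fin5_not_lt_zero q)⟩
          rw [ho0, hbbv 3, hddv 3]
          decide
  constructor
  · exact Ideal.subset_span ⟨monomial dd 1 - monomial bb 1,
      binom_mem_toricIdeal dd bb hphi, dd, hinit, rfl⟩
  · intro d' hled' hne' hmem
    have hd'c : ∀ c, d' c ≤ dd c := Finsupp.le_def.mp hled'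
    have hd3 : d' 1 ≤ 2 := by
      by_cases h3 : d' 1 = 3
      · exfalso
        apply hne'
        have h0' := hd'c 0
        have h1' := hd'c 2
        have h2' := hd'c 3
        have h4' := hd'c 4
        simp only [hddv] at h0' h1' h2' h4'
        simp at h0' h1' h2' h4'
        apply fin5_ext <;> simp only [hddv] <;> simp [h0', h1', h2', h4', h3]
      · have h3' := hd'c 1
        rw [hddv 1] at h3'
        simp at h3'
        omega
    rw [initialIdeal_eq_image] at hmem
    have hsuppm : d' ∈ (monomial d' (1:K)).support := by
      rw [MvPolynomial.support_monomial, if_neg (one_ne_zero)]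
      exact Finset.mem_singleton_self _
    obtain ⟨sdd, ⟨f, hf, hinit'⟩, hle⟩ :=
      MvPolynomial.mem_ideal_span_monomial_image.mp hmem d' hsuppm
    refine no_small_initial ord (Or.inr ⟨ho0, ho1⟩) 1 (Or.inl rfl) f hf sdd hinit' ?_
    intro c
    have h1 := Finsupp.le_def.mp hle c
    have h2 := hd'c c
    rw [hddv c] at h2
    rw [Finsupp.single_apply]
    by_cases hc : c = 1
    · subst hc
      norm_num at h2 ⊢
      omega
    · rw [if_neg (fun h => hc h.symm)]
      rw [if_neg hc] at h2
      omega
end Helpers8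
/-- **Example 1.6.**  For the fourth Veronese subring
`K[A] = K[t_1^4, t_1^3 t_2, t_1^2 t_2^2, t_1 t_2^3, t_2^4]` of `K[t_1, t_2]`:
for every ordering of the variables whose two smallest variables are `x_2` and
`x_4` (indices `1` and `3` below; `ord p` is the `p`-th smallest variable),
either `x_2³` or `x_4³` lies in `G(in_rlex(I_A)) ∩ (x_{i_2})`; in particular
some monomial of `G(in_rlex(I_A))` divisible by the second-smallest variable
`x_{i_2}` is not quadratic — even though `K[A]` is strongly Koszul. -/
theorem veronese_fails_rlex_condition_but_stronglyKoszul (K : Type) [Field K] :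
    (∀ ord : Fin 5 ≃ Fin 5,
      ((ord 0 = 1 ∧ ord 1 = 3) ∨ (ord 0 = 3 ∧ ord 1 = 1)) →
      ((IsMinGen (initialIdeal (rlexLT ord) (toricIdeal K veroExp))
          (Finsupp.single 1 3) ∧ (Finsupp.single (1 : Fin 5) 3) (ord 1) ≠ 0) ∨
       (IsMinGen (initialIdeal (rlexLT ord) (toricIdeal K veroExp))
          (Finsupp.single 3 3) ∧ (Finsupp.single (3 : Fin 5) 3) (ord 1) ≠ 0))) ∧
    (∀ ord : Fin 5 ≃ Fin 5,
      ((ord 0 = 1 ∧ ord 1 = 3) ∨ (ord 0 = 3 ∧ ord 1 = 1)) →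
      ∃ dd : Fin 5 →₀ ℕ,
        IsMinGen (initialIdeal (rlexLT ord) (toricIdeal K veroExp)) dd ∧
        dd (ord 1) ≠ 0 ∧ expDeg dd ≠ 2) ∧
    ToricStronglyKoszul K veroExp := by
  refine ⟨?_, ?_, veronese_stronglyKoszul⟩
  · intro ord hord
    rcases hord with ⟨ho0, ho1⟩ | ⟨ho0, ho1⟩
    · right
      refine ⟨isMinGen_13 ord ho0 ho1, ?_⟩
      rw [ho1, Finsupp.single_apply]
      simp
    · left
      refine ⟨isMinGen_31 ord ho0 ho1, ?_⟩
      rw [ho1, Finsupp.single_apply]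
      simp
  · intro ord hord
    rcases hord with ⟨ho0, ho1⟩ | ⟨ho0, ho1⟩
    · refine ⟨Finsupp.single 3 3, isMinGen_13 ord ho0 ho1, ?_, ?_⟩
      · rw [ho1, Finsupp.single_apply]; simp
      · rw [single_expDeg3]; norm_num
    · refine ⟨Finsupp.single 1 3, isMinGen_31 ord ho0 ho1, ?_, ?_⟩
      · rw [ho1, Finsupp.single_apply]; simp
      · rw [single_expDeg3]; norm_num


end
end
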